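/- arXiv:2010.16289 — 2 statements merged into one kernel-verified Lean document; each statement's English description precedes it below -/
import Mathlib

section
/- (Serfling-type inequality.) For every t ≥ 0, P_{κ,n}( (1/n) Σ_{i=1}^n ω_i − E_{κ,n} ω_1 ≥ t ) ≤ exp(− n t² / (4 (1 − n/N) |𝒳|²)), and the same bound holds for P_{κ,n}( (1/n) Σ_{i=1}^n ω_i − E_{κ,n} ω_1 ≤ −t ). -/
open Finset Real
open scoped Classical

noncomputable section

/-- The multislice `Ω_κ ⊆ 𝒳^N`: vectors with values in `{x ℓ}` where the value `x ℓ`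
appears exactly `κ ℓ` times. -/
def multislice (L N : ℕ) (κ : Fin L → ℕ) (x : Fin L → ℝ) : Finset (Fin N → ℝ) :=
  (Fintype.piFinset fun _ : Fin N => Finset.image x Finset.univ).filter
    (fun ω => ∀ ℓ : Fin L, (Finset.univ.filter fun i => ω i = x ℓ).card = κ ℓ)

/-- Expectation with respect to the uniform distribution on a finite set. -/
def uexpect {α : Type*} (Ω : Finset α) (f : α → ℝ) : ℝ := (∑ ω ∈ Ω, f ω) / Ω.card

/-- Probability of an event with respect to the uniform distribution on a finite set. -/
def uprob {α : Type*} (Ω : Finset α) (p : α → Prop) : ℝ :=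
  ((Ω.filter p).card : ℝ) / Ω.card

/-- `Ω_{κ,n}`: the image of the multislice under the projection onto the first `n`
coordinates (`n` out of `N` sampling without replacement). -/
def msProj (L N n : ℕ) (κ : Fin L → ℕ) (x : Fin L → ℝ) (hn : n ≤ N) :
    Finset (Fin n → ℝ) :=
  (multislice L N κ x).image (fun ω => fun i : Fin n => ω (Fin.castLE hn i))

/-- Expectation `E_{κ,n}` with respect to `P_{κ,n}`, the push-forward of the uniform
distribution `P_κ` on the multislice under the projection onto the first `n` coordinates. -/
def msExpectN (L N n : ℕ) (κ : Fin L → ℕ) (x : Fin L → ℝ) (hn : n ≤ N)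
    (f : (Fin n → ℝ) → ℝ) : ℝ :=
  uexpect (multislice L N κ x) (fun ω => f (fun i : Fin n => ω (Fin.castLE hn i)))

/-- Probability `P_{κ,n}` of an event, i.e. the push-forward of the uniform distribution
`P_κ` on the multislice under the projection onto the first `n` coordinates. -/
def msProbN (L N n : ℕ) (κ : Fin L → ℕ) (x : Fin L → ℝ) (hn : n ≤ N)
    (p : (Fin n → ℝ) → Prop) : ℝ :=
  uprob (multislice L N κ x) (fun ω => p (fun i : Fin n => ω (Fin.castLE hn i)))

section SerflingProof

variable {L : ℕ} {x : Fin L → ℝ} {N : ℕ} {κ : Fin L → ℕ}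

lemma ms_mem_iff {ω : Fin N → ℝ} :
    ω ∈ multislice L N κ x ↔ (∀ i, ∃ ℓ, ω i = x ℓ) ∧
      ∀ ℓ, (Finset.univ.filter fun i => ω i = x ℓ).card = κ ℓ := by
  simp [multislice, Fintype.mem_piFinset, eq_comm]

lemma sum_ite_x {M : Type*} [AddCommMonoid M] (hxinj : Function.Injective x)
    {c : ℝ} {ℓ₀ : Fin L} (h : c = x ℓ₀) (g : Fin L → M) :
    ∑ ℓ, (if c = x ℓ then g ℓ else 0) = g ℓ₀ := by
  rw [Finset.sum_eq_single_of_mem ℓ₀ (Finset.mem_univ _)]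
  · simp [h]
  · intro ℓ _ hne
    rw [if_neg]
    intro hc
    exact hne (hxinj (hc ▸ h.symm ▸ rfl))

lemma ms_sum_count (hxinj : Function.Injective x) {ω : Fin N → ℝ}
    (hω : ω ∈ multislice L N κ x) : ∑ ℓ, κ ℓ = N := by
  obtain ⟨h1, h2⟩ := ms_mem_iff.mp hω
  have : ∀ ℓ, κ ℓ = ∑ i : Fin N, (if ω i = x ℓ then 1 else 0) := by
    intro ℓ; rw [← h2 ℓ, Finset.card_filter]
  calc ∑ ℓ, κ ℓ = ∑ ℓ, ∑ i : Fin N, (if ω i = x ℓ then 1 else 0) := by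
        exact Finset.sum_congr rfl fun ℓ _ => this ℓ
    _ = ∑ i : Fin N, ∑ ℓ, (if ω i = x ℓ then 1 else 0) := Finset.sum_comm
    _ = ∑ i : Fin N, 1 := by
        refine Finset.sum_congr rfl fun i _ => ?_
        obtain ⟨ℓ₀, hℓ₀⟩ := h1 i
        exact sum_ite_x hxinj hℓ₀ (fun _ => 1)
    _ = N := by simp

lemma ms_sum_coords (hxinj : Function.Injective x) {ω : Fin N → ℝ}
    (hω : ω ∈ multislice L N κ x) : ∑ i, ω i = ∑ ℓ, (κ ℓ : ℝ) * x ℓ := by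
  obtain ⟨h1, h2⟩ := ms_mem_iff.mp hω
  calc ∑ i, ω i = ∑ i, ∑ ℓ, (if ω i = x ℓ then x ℓ else 0) := by
        refine Finset.sum_congr rfl fun i _ => ?_
        obtain ⟨ℓ₀, hℓ₀⟩ := h1 i
        rw [sum_ite_x hxinj hℓ₀ x, hℓ₀]
    _ = ∑ ℓ, ∑ i : Fin N, (if ω i = x ℓ then x ℓ else 0) := Finset.sum_comm
    _ = ∑ ℓ, (κ ℓ : ℝ) * x ℓ := by
        refine Finset.sum_congr rfl fun ℓ _ => ?_
        rw [← Finset.sum_filter, Finset.sum_const, h2 ℓ, nsmul_eq_mul]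

lemma ms_bounds {a b : ℝ} (hx1 : ∀ ℓ, a ≤ x ℓ) (hx2 : ∀ ℓ, x ℓ ≤ b) {ω : Fin N → ℝ}
    (hω : ω ∈ multislice L N κ x) (i : Fin N) : a ≤ ω i ∧ ω i ≤ b := by
  obtain ⟨h1, _⟩ := ms_mem_iff.mp hω
  obtain ⟨ℓ, hℓ⟩ := h1 i
  exact ⟨hℓ ▸ hx1 ℓ, hℓ ▸ hx2 ℓ⟩

lemma ms_comp_perm_mem (σ : Equiv.Perm (Fin N)) {ω : Fin N → ℝ}
    (hω : ω ∈ multislice L N κ x) : ω ∘ σ ∈ multislice L N κ x := by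
  obtain ⟨h1, h2⟩ := ms_mem_iff.mp hω
  refine ms_mem_iff.mpr ⟨fun i => h1 (σ i), fun ℓ => ?_⟩
  rw [← h2 ℓ]
  apply Finset.card_nbij' (fun i => σ i) (fun j => σ.symm j) <;> intro i hi <;> simp_all

lemma ms_sum_comp_perm {M : Type*} [AddCommMonoid M] (σ : Equiv.Perm (Fin N))
    (F : (Fin N → ℝ) → M) :
    ∑ ω ∈ multislice L N κ x, F (ω ∘ σ) = ∑ ω ∈ multislice L N κ x, F ω := by
  apply Finset.sum_nbij' (fun ω => ω ∘ σ) (fun ω => ω ∘ σ.symm)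
  · intro ω hω; exact ms_comp_perm_mem σ hω
  · intro ω hω; exact ms_comp_perm_mem σ.symm hω
  · intro ω _; funext i; simp
  · intro ω _; funext i; simp
  · intro ω _; rfl

lemma ms_card_filter_comp_perm (σ : Equiv.Perm (Fin N)) (P : (Fin N → ℝ) → Prop) :
    ((multislice L N κ x).filter (fun ω => P (ω ∘ σ))).card
      = ((multislice L N κ x).filter P).card := by
  have h : ∀ Q : (Fin N → ℝ) → Prop,
      (((multislice L N κ x).filter Q).card : ℝ) = ∑ ω ∈ multislice L N κ x,
        (if Q ω then (1:ℝ) else 0) := by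
    intro Q; rw [Finset.card_filter]; push_cast [apply_ite]; rfl
  have := ms_sum_comp_perm (x := x) (κ := κ) σ (fun ω => if P ω then (1:ℝ) else 0)
  exact_mod_cast (h _).trans (this.trans (h _).symm)

/-- chord bound for exp on `[-B, B]`. -/
lemma exp_chord {B z : ℝ} (hz : |z| ≤ B) :
    Real.exp z ≤ Real.cosh B + (Real.sinh B / B) * z := by
  rcases eq_or_lt_of_le (abs_nonneg z |>.trans hz) with hB | hB
  · have hz0 : z = 0 := by
      have h1 : |z| ≤ 0 := by rw [← hB] at hz; exact hz
      exact abs_eq_zero.mp (le_antisymm h1 (abs_nonneg z))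
    simp [hz0, ← hB]
  · have hBne : B ≠ 0 := ne_of_gt hB
    have h1 : z = ((z + B) / (2 * B)) * B + (1 - (z + B) / (2 * B)) * (-B) := by
      have : ((z + B) / (2 * B)) * B + (1 - (z + B) / (2 * B)) * (-B)
          = ((z + B) / (2 * B)) * (2 * B) - B := by ring
      rw [this, div_mul_cancel₀ _ (by positivity)]
      ring
    have hθ0 : 0 ≤ (z + B) / (2 * B) := by
      apply div_nonneg _ (by linarith)
      linarith [(abs_le.mp hz).1]
    have hθ1 : (z + B) / (2 * B) ≤ 1 := by
      rw [div_le_one (by linarith)]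
      linarith [(abs_le.mp hz).2]
    have hθ1' : (0:ℝ) ≤ 1 - (z + B) / (2 * B) := by linarith
    have hsum1 : (z + B) / (2 * B) + (1 - (z + B) / (2 * B)) = 1 := by ring
    have hconv := convexOn_exp.2 (Set.mem_univ B) (Set.mem_univ (-B)) hθ0 hθ1' hsum1
    rw [smul_eq_mul, smul_eq_mul, smul_eq_mul, smul_eq_mul] at hconv
    calc Real.exp z = Real.exp ((z + B) / (2 * B) * B + (1 - (z + B) / (2 * B)) * (-B)) := by
          rw [← h1]
      _ ≤ (z + B) / (2 * B) * Real.exp B + (1 - (z + B) / (2 * B)) * Real.exp (-B) := hconv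
      _ = Real.cosh B + (Real.sinh B / B) * z := by
          rw [Real.cosh_eq, Real.sinh_eq]
          field_simp
          ring

/-- one-step weighted Hoeffding-type bound via the chord and `cosh ≤ exp sq half`. -/
lemma weighted_step {L : ℕ} (w : Fin L → ℝ) (hw : ∀ ℓ, 0 ≤ w ℓ) (y : Fin L → ℝ)
    {a b : ℝ} (hya : ∀ ℓ, a ≤ y ℓ) (hyb : ∀ ℓ, y ℓ ≤ b) (W m : ℝ)
    (hW : ∑ ℓ, w ℓ = W) (hm : ∑ ℓ, w ℓ * y ℓ = W * m) (hma : a ≤ m) (hmb : m ≤ b)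
    (s : ℝ) :
    ∑ ℓ, w ℓ * Real.exp (s * (y ℓ - m)) ≤ W * Real.exp (s ^ 2 * (b - a) ^ 2 / 2) := by
  set B := |s| * (b - a) with hB
  have hab : 0 ≤ b - a := by linarith
  have hBnn : 0 ≤ B := mul_nonneg (abs_nonneg s) hab
  have hchord : ∀ ℓ, Real.exp (s * (y ℓ - m)) ≤
      Real.cosh B + (Real.sinh B / B) * (s * (y ℓ - m)) := by
    intro ℓ
    apply exp_chord
    rw [abs_mul, hB]
    apply mul_le_mul_of_nonneg_left _ (abs_nonneg s)
    rw [abs_le]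
    constructor
    · linarith [hya ℓ]
    · linarith [hyb ℓ]
  have hW0 : 0 ≤ W := hW ▸ Finset.sum_nonneg (fun ℓ _ => hw ℓ)
  have h2 : ∑ ℓ, w ℓ * ((Real.sinh B / B) * (s * (y ℓ - m)))
      = (Real.sinh B / B) * s * ((∑ ℓ, w ℓ * y ℓ) - (∑ ℓ, w ℓ) * m) := by
    rw [Finset.sum_mul, ← Finset.sum_sub_distrib, Finset.mul_sum]
    exact Finset.sum_congr rfl fun ℓ _ => by ring
  calc ∑ ℓ, w ℓ * Real.exp (s * (y ℓ - m))
      ≤ ∑ ℓ, (w ℓ * Real.cosh B + w ℓ * ((Real.sinh B / B) * (s * (y ℓ - m)))) := by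
        refine Finset.sum_le_sum fun ℓ _ => ?_
        have h3 := mul_le_mul_of_nonneg_left (hchord ℓ) (hw ℓ)
        linarith [h3]
    _ = (∑ ℓ, w ℓ) * Real.cosh B
        + ∑ ℓ, w ℓ * ((Real.sinh B / B) * (s * (y ℓ - m))) := by
        rw [Finset.sum_add_distrib, Finset.sum_mul]
    _ = W * Real.cosh B := by rw [h2, hm, hW]; ring
    _ ≤ W * Real.exp (s ^ 2 * (b - a) ^ 2 / 2) := by
        apply mul_le_mul_of_nonneg_left _ hW0
        have hc := Real.cosh_le_exp_half_sq B
        have hBsq : B ^ 2 = s ^ 2 * (b - a) ^ 2 := by rw [hB, mul_pow, sq_abs]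
        rwa [hBsq] at hc

-- count of a fiber, Fin succ decomposition
lemma card_filter_succ (ω : Fin (M+1) → ℝ) (c : ℝ) :
    (Finset.univ.filter fun i => ω i = c).card
      = (if ω 0 = c then 1 else 0) + (Finset.univ.filter fun i : Fin M => Fin.tail ω i = c).card := by
  rw [Finset.card_filter, Finset.card_filter, Fin.sum_univ_succ]
  rfl

lemma cons_mem_ms (hxinj : Function.Injective x) {ℓ : Fin L} (hκℓ : 1 ≤ κ ℓ)
    {ω' : Fin M → ℝ} (hω' : ω' ∈ multislice L M (Function.update κ ℓ (κ ℓ - 1)) x) :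
    Fin.cons (x ℓ) ω' ∈ multislice L (M+1) κ x := by
  obtain ⟨h1, h2⟩ := ms_mem_iff.mp hω'
  refine ms_mem_iff.mpr ⟨fun i => ?_, fun ℓ' => ?_⟩
  · refine Fin.cases ?_ ?_ i
    · exact ⟨ℓ, rfl⟩
    · intro j; simpa using h1 j
  · rw [card_filter_succ]
    have htail : Fin.tail (Fin.cons (x ℓ) ω' : Fin (M+1) → ℝ) = ω' := rfl
    rw [htail, h2 ℓ', Fin.cons_zero]
    by_cases h : ℓ' = ℓ
    · subst h; rw [if_pos rfl, Function.update_self]; omega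
    · rw [if_neg (fun hc => h (hxinj hc).symm), Function.update_of_ne h]
      omega

lemma tail_mem_ms (hxinj : Function.Injective x) {ℓ : Fin L} {ω : Fin (M+1) → ℝ}
    (hω : ω ∈ multislice L (M+1) κ x) (h0 : ω 0 = x ℓ) :
    Fin.tail ω ∈ multislice L M (Function.update κ ℓ (κ ℓ - 1)) x ∧ 1 ≤ κ ℓ := by
  obtain ⟨h1, h2⟩ := ms_mem_iff.mp hω
  have hκℓ : 1 ≤ κ ℓ := by
    rw [← h2 ℓ, card_filter_succ, if_pos h0]; omega
  refine ⟨ms_mem_iff.mpr ⟨fun i => h1 i.succ, fun ℓ' => ?_⟩, hκℓ⟩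
  have := h2 ℓ'
  rw [card_filter_succ] at this
  by_cases h : ℓ' = ℓ
  · subst h; rw [if_pos h0] at this; rw [Function.update_self]; omega
  · rw [if_neg (h0 ▸ fun hc => h (hxinj hc).symm)] at this
    rw [Function.update_of_ne h]; omega

/-- Decomposition of a sum over the multislice according to the first coordinate. -/
lemma ms_sum_succ (hxinj : Function.Injective x) (hκ : ∑ ℓ, κ ℓ = M + 1) {M_ : Type*} [AddCommMonoid M_]
    (F : (Fin (M+1) → ℝ) → M_) :
    ∑ ω ∈ multislice L (M+1) κ x, F ω
      = ∑ ℓ : Fin L, ∑ ω' ∈ multislice L M (Function.update κ ℓ (κ ℓ - 1)) x,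
          F (Fin.cons (x ℓ) ω') := by
  calc ∑ ω ∈ multislice L (M+1) κ x, F ω
      = ∑ ω ∈ multislice L (M+1) κ x, ∑ ℓ, (if ω 0 = x ℓ then F ω else 0) := by
        refine Finset.sum_congr rfl fun ω hω => ?_
        obtain ⟨ℓ₀, hℓ₀⟩ := (ms_mem_iff.mp hω).1 0
        rw [sum_ite_x hxinj hℓ₀ (fun _ => F ω)]
    _ = ∑ ℓ, ∑ ω ∈ multislice L (M+1) κ x, (if ω 0 = x ℓ then F ω else 0) := Finset.sum_comm
    _ = ∑ ℓ, ∑ ω ∈ (multislice L (M+1) κ x).filter (fun ω => ω 0 = x ℓ), F ω := by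
        refine Finset.sum_congr rfl fun ℓ _ => ?_
        rw [Finset.sum_filter]
    _ = ∑ ℓ : Fin L, ∑ ω' ∈ multislice L M (Function.update κ ℓ (κ ℓ - 1)) x,
          F (Fin.cons (x ℓ) ω') := by
        refine Finset.sum_congr rfl fun ℓ _ => ?_
        refine Finset.sum_nbij' (fun ω => Fin.tail ω) (fun ω' => Fin.cons (x ℓ) ω') ?_ ?_ ?_ ?_ ?_
        · intro ω hω
          rw [Finset.mem_filter] at hω
          exact (tail_mem_ms hxinj hω.1 hω.2).1
        · intro ω' hω'
          have hκℓ : 1 ≤ κ ℓ := by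
            have hs := ms_sum_count hxinj hω'
            rw [← Finset.add_sum_erase _ _ (Finset.mem_univ ℓ), Function.update_self] at hs
            have hs2 : ∑ ℓ', κ ℓ' = M + 1 := hκ
            rw [← Finset.add_sum_erase _ _ (Finset.mem_univ ℓ)] at hs2
            have : ∑ ℓ' ∈ Finset.univ.erase ℓ, Function.update κ ℓ (κ ℓ - 1) ℓ'
                = ∑ ℓ' ∈ Finset.univ.erase ℓ, κ ℓ' := by
              refine Finset.sum_congr rfl fun ℓ' hℓ' => ?_
              rw [Function.update_of_ne (Finset.ne_of_mem_erase hℓ')]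
            omega
          exact Finset.mem_filter.mpr ⟨cons_mem_ms hxinj hκℓ hω', Fin.cons_zero _ _⟩
        · intro ω hω
          rw [Finset.mem_filter] at hω
          show Fin.cons (x ℓ) (Fin.tail ω) = ω
          rw [← hω.2, Fin.cons_self_tail]
        · intro ω' _; exact Fin.tail_cons _ _
        · intro ω hω
          rw [Finset.mem_filter] at hω
          show F ω = F (Fin.cons (x ℓ) (Fin.tail ω))
          rw [← hω.2, Fin.cons_self_tail]

lemma ms_nonempty (hxinj : Function.Injective x) :
    ∀ (N : ℕ) (κ : Fin L → ℕ), ∑ ℓ, κ ℓ = N → (multislice L N κ x).Nonempty := by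
  intro N
  induction N with
  | zero =>
    intro κ hκ
    refine ⟨Fin.elim0, ms_mem_iff.mpr ⟨fun i => i.elim0, fun ℓ => ?_⟩⟩
    have : κ ℓ = 0 := by
      by_contra h
      have : 1 ≤ ∑ ℓ', κ ℓ' := le_trans (by omega) (Finset.single_le_sum (fun _ _ => Nat.zero_le _) (Finset.mem_univ ℓ))
      omega
    simp [this]
  | succ M ih =>
    intro κ hκ
    have : ∃ ℓ, 1 ≤ κ ℓ := by
      by_contra h
      push_neg at h
      have : ∑ ℓ, κ ℓ = 0 := Finset.sum_eq_zero (fun ℓ _ => by have := h ℓ; omega)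
      omega
    obtain ⟨ℓ, hℓ⟩ := this
    have hsum : ∑ ℓ', Function.update κ ℓ (κ ℓ - 1) ℓ' = M := by
      rw [← Finset.add_sum_erase _ _ (Finset.mem_univ ℓ), Function.update_self]
      rw [← Finset.add_sum_erase _ _ (Finset.mem_univ ℓ)] at hκ
      have : ∑ ℓ' ∈ Finset.univ.erase ℓ, Function.update κ ℓ (κ ℓ - 1) ℓ'
          = ∑ ℓ' ∈ Finset.univ.erase ℓ, κ ℓ' :=
        Finset.sum_congr rfl fun ℓ' hℓ' => Function.update_of_ne (Finset.ne_of_mem_erase hℓ') _ _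
      omega
    obtain ⟨ω', hω'⟩ := ih _ hsum
    exact ⟨Fin.cons (x ℓ) ω', cons_mem_ms hxinj hℓ hω'⟩

/-- the sum of any fixed coordinate over the multislice -/
lemma ms_coord_sum (hxinj : Function.Injective x) (i : Fin N) :
    (N : ℝ) * ∑ ω ∈ multislice L N κ x, ω i
      = ((multislice L N κ x).card : ℝ) * ∑ ℓ, (κ ℓ : ℝ) * x ℓ := by
  have hswap : ∀ j : Fin N, ∑ ω ∈ multislice L N κ x, ω j = ∑ ω ∈ multislice L N κ x, ω i := by
    intro j
    have := ms_sum_comp_perm (x := x) (κ := κ) (Equiv.swap i j) (fun ω => ω i)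
    simpa using this
  calc (N : ℝ) * ∑ ω ∈ multislice L N κ x, ω i
      = ∑ j : Fin N, ∑ ω ∈ multislice L N κ x, ω j := by
        rw [Finset.sum_congr rfl (fun j _ => hswap j), Finset.sum_const]
        simp [mul_comm]
    _ = ∑ ω ∈ multislice L N κ x, ∑ j, ω j := Finset.sum_comm
    _ = ∑ ω ∈ multislice L N κ x, ∑ ℓ, (κ ℓ : ℝ) * x ℓ :=
        Finset.sum_congr rfl fun ω hω => ms_sum_coords hxinj hω
    _ = _ := by rw [Finset.sum_const, nsmul_eq_mul]

lemma update_sum_facts (hκ : ∑ ℓ, κ ℓ = M + 1) {ℓ : Fin L}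
    (hs : ∑ ℓ', Function.update κ ℓ (κ ℓ - 1) ℓ' = M) : 1 ≤ κ ℓ := by
  rw [← Finset.add_sum_erase _ _ (Finset.mem_univ ℓ), Function.update_self] at hs
  rw [← Finset.add_sum_erase _ _ (Finset.mem_univ ℓ)] at hκ
  have he : ∑ ℓ' ∈ Finset.univ.erase ℓ, Function.update κ ℓ (κ ℓ - 1) ℓ'
      = ∑ ℓ' ∈ Finset.univ.erase ℓ, κ ℓ' :=
    Finset.sum_congr rfl fun ℓ' hℓ' => Function.update_of_ne (Finset.ne_of_mem_erase hℓ') _ _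
  omega

theorem ms_mgf (hxinj : Function.Injective x) {a b : ℝ}
    (hx1 : ∀ ℓ, a ≤ x ℓ) (hx2 : ∀ ℓ, x ℓ ≤ b) :
    ∀ (n N : ℕ) (κ : Fin L → ℕ) (h : n ≤ N) (_ : ∑ ℓ, κ ℓ = N) (s : ℝ),
    ∑ ω ∈ multislice L N κ x,
        Real.exp (s * ((∑ i : Fin n, ω (Fin.castLE h i))
          - n * ((∑ ℓ, (κ ℓ : ℝ) * x ℓ) / N)))
      ≤ ((multislice L N κ x).card : ℝ) * Real.exp (n * (s ^ 2 * (b - a) ^ 2 / 2)) := by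
  intro n
  induction n with
  | zero =>
    intro N κ h hκ s
    simp
  | succ n ih =>
    intro N κ h hκ s
    rcases N with _ | M
    · omega
    have hM : n ≤ M := by omega
    set T : ℝ := ∑ ℓ, (κ ℓ : ℝ) * x ℓ with hT
    set μ : ℝ := T / (M + 1 : ℕ) with hμ
    set c : ℝ := ((M : ℝ) - n) / M with hc
    set E2 : ℝ := s ^ 2 * (b - a) ^ 2 / 2 with hE2
    -- decompose
    rw [ms_sum_succ hxinj hκ]
    -- the per-ℓ bound
    have claim : ∀ ℓ : Fin L,
        ∑ ω' ∈ multislice L M (Function.update κ ℓ (κ ℓ - 1)) x,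
          Real.exp (s * ((∑ i : Fin (n+1), (Fin.cons (x ℓ) ω' : Fin (M+1) → ℝ) (Fin.castLE h i))
            - (n+1 : ℕ) * μ))
        ≤ ((multislice L M (Function.update κ ℓ (κ ℓ - 1)) x).card : ℝ)
            * Real.exp (s * c * (x ℓ - μ)) * Real.exp (n * E2) := by
      intro ℓ
      set κ' := Function.update κ ℓ (κ ℓ - 1) with hκ'
      rcases Finset.eq_empty_or_nonempty (multislice L M κ' x) with hemp | hne
      · simp [hemp]
      obtain ⟨ω₀, hω₀⟩ := hne
      have hsum' : ∑ ℓ', κ' ℓ' = M := ms_sum_count hxinj hω₀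
      have hκℓ : 1 ≤ κ ℓ := update_sum_facts hκ hsum'
      set T' : ℝ := ∑ j, (κ' j : ℝ) * x j with hT'
      have hTsub : T' = T - x ℓ := by
        rw [hT', hT]
        rw [← Finset.add_sum_erase _ _ (Finset.mem_univ ℓ),
            ← Finset.add_sum_erase _ (fun j => (κ j : ℝ) * x j) (Finset.mem_univ ℓ)]
        have he : ∑ j ∈ Finset.univ.erase ℓ, (κ' j : ℝ) * x j
            = ∑ j ∈ Finset.univ.erase ℓ, (κ j : ℝ) * x j :=
          Finset.sum_congr rfl fun j hj => by
            rw [hκ', Function.update_of_ne (Finset.ne_of_mem_erase hj)]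
        rw [he, hκ', Function.update_self]
        have : ((κ ℓ - 1 : ℕ) : ℝ) = (κ ℓ : ℝ) - 1 := by
          have := hκℓ; push_cast [this]; ring
        rw [this]; ring
      -- the sum over first n+1 coordinates of the cons
      have hsplit : ∀ ω' : Fin M → ℝ,
          (∑ i : Fin (n+1), (Fin.cons (x ℓ) ω' : Fin (M+1) → ℝ) (Fin.castLE h i))
            = x ℓ + ∑ i : Fin n, ω' (Fin.castLE hM i) := by
        intro ω'
        rw [Fin.sum_univ_succ]
        have h0 : (Fin.cons (x ℓ) ω' : Fin (M+1) → ℝ) (Fin.castLE h 0) = x ℓ := rfl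
        rw [h0]
        congr 1
      -- exponent identity
      have hident : ∀ S' : ℝ,
          s * ((x ℓ + S') - (n+1 : ℕ) * μ)
            = s * c * (x ℓ - μ) + s * (S' - n * (T' / M)) := by
        intro S'
        rcases Nat.eq_zero_or_pos M with hM0 | hM0
        · subst hM0
          have hn0 : n = 0 := by omega
          subst hn0
          -- here κ' ≡ 0, so κ ℓ = 1 and κ j = 0 for j ≠ ℓ, hence T = x ℓ, μ = x ℓ
          have hk0 : ∀ j, κ' j = 0 := by
            intro j
            have := Finset.sum_eq_zero_iff.mp hsum' j (Finset.mem_univ j)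
            exact this
          have hTeq : T = x ℓ := by
            rw [hT]
            rw [Finset.sum_eq_single ℓ]
            · have hκℓ1 : κ ℓ = 1 := by
                have := hk0 ℓ; rw [hκ', Function.update_self] at this; omega
              rw [hκℓ1]; simp
            · intro j _ hj
              have := hk0 j; rw [hκ', Function.update_of_ne hj] at this
              rw [this]; simp
            · intro hj; exact absurd (Finset.mem_univ ℓ) hj
          have hμeq : μ = x ℓ := by rw [hμ, hTeq]; norm_num
          rw [hμeq, hc]
          norm_num
        · have hMne : (M : ℝ) ≠ 0 := Nat.cast_ne_zero.mpr (by omega)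
          have hM1ne : ((M : ℝ) + 1) ≠ 0 := by positivity
          rw [hTsub, hμ, hc]
          push_cast
          field_simp
          ring
      calc ∑ ω' ∈ multislice L M κ' x,
            Real.exp (s * ((∑ i : Fin (n+1), (Fin.cons (x ℓ) ω' : Fin (M+1) → ℝ) (Fin.castLE h i))
              - (n+1 : ℕ) * μ))
          = ∑ ω' ∈ multislice L M κ' x,
              Real.exp (s * c * (x ℓ - μ))
                * Real.exp (s * ((∑ i : Fin n, ω' (Fin.castLE hM i)) - n * (T' / M))) := by
            refine Finset.sum_congr rfl fun ω' _ => ?_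
            rw [hsplit ω', hident, Real.exp_add]
        _ = Real.exp (s * c * (x ℓ - μ))
              * ∑ ω' ∈ multislice L M κ' x,
                Real.exp (s * ((∑ i : Fin n, ω' (Fin.castLE hM i)) - n * (T' / M))) := by
            rw [Finset.mul_sum]
        _ ≤ Real.exp (s * c * (x ℓ - μ))
              * (((multislice L M κ' x).card : ℝ) * Real.exp (n * E2)) := by
            apply mul_le_mul_of_nonneg_left _ (Real.exp_nonneg _)
            exact ih M κ' hM hsum' s
        _ = ((multislice L M κ' x).card : ℝ)
              * Real.exp (s * c * (x ℓ - μ)) * Real.exp (n * E2) := by ring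
    -- sum the per-ℓ bounds
    have step1 : ∑ ℓ : Fin L, ∑ ω' ∈ multislice L M (Function.update κ ℓ (κ ℓ - 1)) x,
          Real.exp (s * ((∑ i : Fin (n+1), (Fin.cons (x ℓ) ω' : Fin (M+1) → ℝ) (Fin.castLE h i))
            - (n+1 : ℕ) * μ))
        ≤ ∑ ℓ : Fin L, ((multislice L M (Function.update κ ℓ (κ ℓ - 1)) x).card : ℝ)
            * Real.exp (s * c * (x ℓ - μ)) * Real.exp (n * E2) :=
      Finset.sum_le_sum fun ℓ _ => claim ℓ
    -- weights
    set w : Fin L → ℝ := fun ℓ => ((multislice L M (Function.update κ ℓ (κ ℓ - 1)) x).card : ℝ)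
      with hw
    have hwnn : ∀ ℓ, 0 ≤ w ℓ := fun ℓ => Nat.cast_nonneg _
    set W : ℝ := ((multislice L (M+1) κ x).card : ℝ) with hW
    have hWsum : ∑ ℓ, w ℓ = W := by
      have := ms_sum_succ (x := x) hxinj hκ (fun _ => (1 : ℝ))
      simp only [Finset.sum_const, nsmul_eq_mul, mul_one] at this
      rw [hW, this]
    have hmean : ∑ ℓ, w ℓ * x ℓ = W * μ := by
      have h1 := ms_coord_sum (x := x) (κ := κ) hxinj (0 : Fin (M+1))
      have h2 := ms_sum_succ (x := x) hxinj hκ (fun ω => ω 0)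
      have h3 : ∑ ω ∈ multislice L (M+1) κ x, ω 0 = ∑ ℓ, w ℓ * x ℓ := by
        rw [h2]
        refine Finset.sum_congr rfl fun ℓ _ => ?_
        have hcz : ∀ ω' : Fin M → ℝ, (Fin.cons (x ℓ) ω' : Fin (M+1) → ℝ) 0 = x ℓ :=
          fun _ => rfl
        rw [Finset.sum_congr rfl (fun ω' _ => hcz ω'), Finset.sum_const, nsmul_eq_mul]
      rw [h3] at h1
      have hM1ne : ((M+1 : ℕ) : ℝ) ≠ 0 := by positivity
      rw [hμ, hW]
      rw [mul_div_assoc']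
      rw [eq_div_iff hM1ne]
      rw [mul_comm] at h1
      rw [h1, hT]
    have hcast : ∑ ℓ, ((κ ℓ : ℝ)) = ((M+1 : ℕ) : ℝ) := by
      rw [← Nat.cast_sum, hκ]
    have hμa : a ≤ μ := by
      rw [hμ, le_div_iff₀ (by positivity), hT]
      calc a * ((M+1 : ℕ) : ℝ) = ∑ ℓ, (κ ℓ : ℝ) * a := by
            rw [← Finset.sum_mul, hcast]; ring
        _ ≤ ∑ ℓ, (κ ℓ : ℝ) * x ℓ :=
            Finset.sum_le_sum fun ℓ _ => mul_le_mul_of_nonneg_left (hx1 ℓ) (Nat.cast_nonneg _)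
    have hμb : μ ≤ b := by
      rw [hμ, div_le_iff₀ (by positivity), hT]
      calc ∑ ℓ, (κ ℓ : ℝ) * x ℓ ≤ ∑ ℓ, (κ ℓ : ℝ) * b :=
            Finset.sum_le_sum fun ℓ _ => mul_le_mul_of_nonneg_left (hx2 ℓ) (Nat.cast_nonneg _)
        _ = b * ((M+1 : ℕ) : ℝ) := by rw [← Finset.sum_mul, hcast]; ring
    have step2 := weighted_step w hwnn x hx1 hx2 W μ hWsum hmean hμa hμb (s * c)
    have hc0 : 0 ≤ c := by
      rcases Nat.eq_zero_or_pos M with hM0 | hM0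
      · rw [hc, hM0]; norm_num
      · rw [hc]
        apply div_nonneg _ (by positivity)
        have : (n : ℝ) ≤ (M : ℝ) := by exact_mod_cast hM
        linarith
    have hc1 : c ≤ 1 := by
      rcases Nat.eq_zero_or_pos M with hM0 | hM0
      · rw [hc, hM0]; norm_num
      · rw [hc, div_le_one (by positivity)]
        have : (0 : ℝ) ≤ (n : ℝ) := Nat.cast_nonneg n
        linarith
    have step3 : (s * c) ^ 2 * (b - a) ^ 2 / 2 ≤ E2 := by
      rw [hE2]
      have h1 : (s * c) ^ 2 = s ^ 2 * c ^ 2 := by ring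
      have h2 : c ^ 2 ≤ 1 := by nlinarith
      have h3 := mul_le_mul_of_nonneg_left h2
        (mul_nonneg (sq_nonneg s) (sq_nonneg (b - a)))
      rw [h1]
      nlinarith [h3]
    have hW0 : 0 ≤ W := Nat.cast_nonneg _
    calc ∑ ℓ : Fin L, ∑ ω' ∈ multislice L M (Function.update κ ℓ (κ ℓ - 1)) x,
          Real.exp (s * ((∑ i : Fin (n+1), (Fin.cons (x ℓ) ω' : Fin (M+1) → ℝ) (Fin.castLE h i))
            - (n+1 : ℕ) * μ))
        ≤ ∑ ℓ : Fin L, w ℓ * Real.exp (s * c * (x ℓ - μ)) * Real.exp (n * E2) := step1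
      _ = (∑ ℓ : Fin L, w ℓ * Real.exp (s * c * (x ℓ - μ))) * Real.exp (n * E2) := by
          rw [Finset.sum_mul]
      _ ≤ (W * Real.exp ((s * c) ^ 2 * (b - a) ^ 2 / 2)) * Real.exp (n * E2) := by
          apply mul_le_mul_of_nonneg_right step2 (Real.exp_nonneg _)
      _ ≤ (W * Real.exp E2) * Real.exp (n * E2) := by
          apply mul_le_mul_of_nonneg_right _ (Real.exp_nonneg _)
          exact mul_le_mul_of_nonneg_left (Real.exp_le_exp.mpr step3) hW0
      _ = W * Real.exp ((n+1 : ℕ) * E2) := by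
          rw [mul_assoc, ← Real.exp_add]
          congr 2
          push_cast
          ring

lemma ms_chernoff (hxinj : Function.Injective x) {a b : ℝ}
    (hx1 : ∀ ℓ, a ≤ x ℓ) (hx2 : ∀ ℓ, x ℓ ≤ b) (n : ℕ) (h : n ≤ N)
    (hκ : ∑ ℓ, κ ℓ = N) (s u : ℝ) (hs : 0 ≤ s) :
    ((((multislice L N κ x).filter fun ω => (∑ i : Fin n, ω (Fin.castLE h i))
        - n * ((∑ ℓ, (κ ℓ : ℝ) * x ℓ) / N) ≥ u)).card : ℝ)
      ≤ ((multislice L N κ x).card : ℝ)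
        * Real.exp (-(s * u) + n * (s ^ 2 * (b - a) ^ 2 / 2)) ∧
    ((((multislice L N κ x).filter fun ω => (∑ i : Fin n, ω (Fin.castLE h i))
        - n * ((∑ ℓ, (κ ℓ : ℝ) * x ℓ) / N) ≤ -u)).card : ℝ)
      ≤ ((multislice L N κ x).card : ℝ)
        * Real.exp (-(s * u) + n * (s ^ 2 * (b - a) ^ 2 / 2)) := by
  set Ω := multislice L N κ x with hΩ
  set μ : ℝ := (∑ ℓ, (κ ℓ : ℝ) * x ℓ) / N with hμ
  set Sn : (Fin N → ℝ) → ℝ := fun ω => ∑ i : Fin n, ω (Fin.castLE h i) with hSn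
  have main : ∀ s' : ℝ, s' ^ 2 = s ^ 2 →
      ∀ P : (Fin N → ℝ) → Prop, (∀ ω, P ω → s * u ≤ s' * (Sn ω - n * μ)) →
      ((Ω.filter P).card : ℝ)
        ≤ (Ω.card : ℝ) * Real.exp (-(s * u) + n * (s ^ 2 * (b - a) ^ 2 / 2)) := by
    intro s' hs' P hP
    have h1 : ((Ω.filter P).card : ℝ) ≤ ∑ ω ∈ Ω.filter P,
        Real.exp (s' * (Sn ω - n * μ) - s * u) := by
      rw [Finset.card_eq_sum_ones, Nat.cast_sum]
      refine Finset.sum_le_sum fun ω hω => ?_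
      have hmem := hP ω (Finset.mem_filter.mp hω).2
      have h0 : (0:ℝ) ≤ s' * (Sn ω - n * μ) - s * u := by linarith
      calc ((1:ℕ):ℝ) = Real.exp 0 := by norm_num
        _ ≤ _ := Real.exp_le_exp.mpr h0
    have h2 : ∑ ω ∈ Ω.filter P, Real.exp (s' * (Sn ω - n * μ) - s * u)
        ≤ ∑ ω ∈ Ω, Real.exp (s' * (Sn ω - n * μ) - s * u) :=
      Finset.sum_le_sum_of_subset_of_nonneg (Finset.filter_subset _ _)
        (fun ω _ _ => Real.exp_nonneg _)
    have h3 : ∑ ω ∈ Ω, Real.exp (s' * (Sn ω - n * μ) - s * u)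
        = Real.exp (-(s * u)) * ∑ ω ∈ Ω, Real.exp (s' * (Sn ω - n * μ)) := by
      rw [Finset.mul_sum]
      refine Finset.sum_congr rfl fun ω _ => ?_
      rw [← Real.exp_add]
      congr 1
      ring
    have h4 := ms_mgf hxinj hx1 hx2 n N κ h hκ s'
    calc ((Ω.filter P).card : ℝ) ≤ Real.exp (-(s * u)) * ∑ ω ∈ Ω, Real.exp (s' * (Sn ω - n * μ)) := by
          rw [← h3]; exact h1.trans h2
      _ ≤ Real.exp (-(s * u)) * ((Ω.card : ℝ) * Real.exp (n * (s' ^ 2 * (b - a) ^ 2 / 2))) := by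
          apply mul_le_mul_of_nonneg_left _ (Real.exp_nonneg _)
          exact h4
      _ = (Ω.card : ℝ) * Real.exp (-(s * u) + n * (s ^ 2 * (b - a) ^ 2 / 2)) := by
          rw [hs']
          rw [show Real.exp (-(s * u)) * ((Ω.card : ℝ) * Real.exp (n * (s ^ 2 * (b - a) ^ 2 / 2)))
            = (Ω.card : ℝ) * (Real.exp (-(s * u)) * Real.exp (n * (s ^ 2 * (b - a) ^ 2 / 2)))
            from by ring, ← Real.exp_add]
  constructor
  · refine main s rfl _ fun ω hω => ?_
    exact mul_le_mul_of_nonneg_left hω hs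
  · refine main (-s) (by ring) _ fun ω hω => ?_
    have := mul_le_mul_of_nonneg_left (neg_le_neg hω) hs
    calc s * u = s * (-(-u)) := by ring
      _ ≤ s * (-(Sn ω - n * μ)) := by
          apply mul_le_mul_of_nonneg_left _ hs
          linarith
      _ = (-s) * (Sn ω - n * μ) := by ring

lemma sum_split {n : ℕ} (hn : n ≤ N) (hm : N - n ≤ N) (ω : Fin N → ℝ) :
    (∑ i : Fin n, ω (Fin.castLE hn i))
      + ∑ j : Fin (N - n), ω (Fin.rev (Fin.castLE hm j)) = ∑ i, ω i := by
  classical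
  set A : Finset (Fin N) := Finset.univ.image (Fin.castLE hn) with hA
  set B : Finset (Fin N) := Finset.univ.image (fun j => Fin.rev (Fin.castLE hm j)) with hB
  have hinjA : Function.Injective (fun i : Fin n => (Fin.castLE hn i : Fin N)) := by
    intro i j hij
    apply Fin.ext
    have := congrArg Fin.val hij
    simpa using this
  have hinjB : Function.Injective (fun j : Fin (N - n) => Fin.rev (Fin.castLE hm j)) := by
    intro i j hij
    apply Fin.ext
    have h2 := congrArg Fin.val hij
    simp only [Fin.val_rev, Fin.coe_castLE] at h2
    have := i.isLt
    have := j.isLt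
    omega
  have hdisj : Disjoint A B := by
    rw [Finset.disjoint_left]
    intro i hiA hiB
    rw [hA, Finset.mem_image] at hiA
    rw [hB, Finset.mem_image] at hiB
    obtain ⟨j1, _, hj1⟩ := hiA
    obtain ⟨j2, _, hj2⟩ := hiB
    have e1 : i.val = j1.val := by rw [← hj1]; simp
    have e2 := congrArg Fin.val hj2
    rw [Fin.val_rev] at e2
    simp only [Fin.coe_castLE] at e2
    have := j1.isLt
    have := j2.isLt
    omega
  have hunion : A ∪ B = Finset.univ := by
    apply Finset.eq_univ_of_card
    rw [Finset.card_union_of_disjoint hdisj, hA, hB,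
      Finset.card_image_of_injective _ hinjA, Finset.card_image_of_injective _ hinjB]
    simp only [Finset.card_univ, Fintype.card_fin]
    omega
  calc (∑ i : Fin n, ω (Fin.castLE hn i))
        + ∑ j : Fin (N - n), ω (Fin.rev (Fin.castLE hm j))
      = (∑ i ∈ A, ω i) + ∑ i ∈ B, ω i := by
        rw [hA, hB, Finset.sum_image (fun i _ j _ hij => hinjA hij),
          Finset.sum_image (fun i _ j _ hij => hinjB hij)]
    _ = ∑ i ∈ A ∪ B, ω i := (Finset.sum_union hdisj).symm
    _ = ∑ i, ω i := by rw [hunion]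


end SerflingProof

set_option maxHeartbeats 2000000 in
/-- Serfling-type inequality for sampling without replacement. -/
theorem stmt6 (L N n : ℕ) (hL : 2 ≤ L) (κ : Fin L → ℕ) (hκ : ∀ ℓ, 1 ≤ κ ℓ)
    (hN : N = ∑ ℓ, κ ℓ) (x : Fin L → ℝ) (hx : StrictMono x) (hn : n ≤ N) (hn1 : 1 ≤ n)
    (t : ℝ) (ht : 0 ≤ t) :
    msProbN L N n κ x hn
        (fun ω => (1 / (n : ℝ)) * ∑ i, ω i -
          msExpectN L N n κ x hn (fun ω => ω ⟨0, by omega⟩) ≥ t) ≤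
      Real.exp (-(n * t ^ 2) /
        (4 * (1 - (n : ℝ) / N) * (x ⟨L - 1, by omega⟩ - x ⟨0, by omega⟩) ^ 2)) ∧
    msProbN L N n κ x hn
        (fun ω => (1 / (n : ℝ)) * ∑ i, ω i -
          msExpectN L N n κ x hn (fun ω => ω ⟨0, by omega⟩) ≤ -t) ≤
      Real.exp (-(n * t ^ 2) /
        (4 * (1 - (n : ℝ) / N) * (x ⟨L - 1, by omega⟩ - x ⟨0, by omega⟩) ^ 2)) := by
  classical
  have hxinj : Function.Injective x := hx.injective
  have h0L : 0 < L := by omega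
  have hL1 : L - 1 < L := by omega
  have hκN : ∑ ℓ, κ ℓ = N := hN.symm
  have hNpos : 0 < N := by omega
  set a : ℝ := x ⟨0, h0L⟩ with ha
  set b : ℝ := x ⟨L - 1, hL1⟩ with hb
  have hx1 : ∀ ℓ, a ≤ x ℓ := fun ℓ => hx.monotone (by rw [Fin.le_def]; simp)
  have hx2 : ∀ ℓ, x ℓ ≤ b := fun ℓ => hx.monotone (by rw [Fin.le_def]; simp; omega)
  have hD : 0 < b - a := sub_pos.mpr (hx (by rw [Fin.lt_def]; simp; omega))
  have hD2 : (0:ℝ) < (b - a) ^ 2 := by positivity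
  set Ω := multislice L N κ x with hΩ
  have hΩne : Ω.Nonempty := ms_nonempty hxinj N κ hκN
  have hΩpos : (0:ℝ) < Ω.card := by exact_mod_cast Finset.card_pos.mpr hΩne
  set T : ℝ := ∑ ℓ, (κ ℓ : ℝ) * x ℓ with hT
  set μ : ℝ := T / N with hμ
  have hNR : (0:ℝ) < (N:ℝ) := by exact_mod_cast hNpos
  have hnR : (0:ℝ) < (n:ℝ) := by exact_mod_cast hn1
  -- the expectation of any single coordinate
  have hE : ∀ i0 : Fin n, msExpectN L N n κ x hn (fun ω => ω i0) = μ := by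
    intro i0
    show (∑ ω ∈ Ω, ω (Fin.castLE hn i0)) / (Ω.card : ℝ) = μ
    have h1 := ms_coord_sum (x := x) (κ := κ) hxinj (Fin.castLE hn i0)
    rw [hμ, hT, div_eq_div_iff hΩpos.ne' hNR.ne']
    rw [← hΩ] at h1
    linarith [h1]
  set Sn : (Fin N → ℝ) → ℝ := fun ω => ∑ i : Fin n, ω (Fin.castLE hn i) with hSn
  -- main bounds on the two tails, in normalized form
  have main : ((Ω.filter fun ω => Sn ω - n * μ ≥ (n:ℝ) * t).card : ℝ) / (Ω.card : ℝ)
        ≤ Real.exp (-(n * t ^ 2) / (4 * (1 - (n : ℝ) / N) * (b - a) ^ 2)) ∧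
      ((Ω.filter fun ω => Sn ω - n * μ ≤ -((n:ℝ) * t)).card : ℝ) / (Ω.card : ℝ)
        ≤ Real.exp (-(n * t ^ 2) / (4 * (1 - (n : ℝ) / N) * (b - a) ^ 2)) := by
    rcases eq_or_lt_of_le hn with hnN | hnN
    · -- n = N : the bound is trivial since the RHS is exp(-x/0) = exp 0 = 1
      have hzero : (1 - (n:ℝ)/N) = 0 := by
        rw [hnN]; field_simp; norm_num
      have hden : 4 * (1 - (n:ℝ)/N) * (b - a) ^ 2 = 0 := by rw [hzero]; ring
      rw [hden, div_zero, Real.exp_zero]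
      constructor <;>
        · rw [div_le_one hΩpos]
          exact_mod_cast Nat.cast_le.mpr (Finset.card_filter_le _ _)
    · -- n < N
      have hmN : N - n ≤ N := by omega
      have hmpos : 0 < N - n := by omega
      have hmR : (0:ℝ) < ((N - n : ℕ) : ℝ) := by exact_mod_cast hmpos
      have hcastm : ((N - n : ℕ) : ℝ) = (N:ℝ) - n := by
        push_cast [Nat.cast_sub hn]; ring
      have hNn : (0:ℝ) < (N:ℝ) - n := by rw [← hcastm]; exact hmR
      have hfrac : (1 - (n:ℝ)/N) = ((N:ℝ) - n) / N := by field_simp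
      have hBpos : (0:ℝ) < 4 * (1 - (n:ℝ)/N) * (b - a) ^ 2 := by
        rw [hfrac]; positivity
      -- rewrite the target exponent without nested division
      have htz : -(↑n * t ^ 2) / (4 * (1 - (n : ℝ) / N) * (b - a) ^ 2)
          = -((n:ℝ) * t ^ 2 * N) / (4 * ((N:ℝ) - n) * (b - a) ^ 2) := by
        rw [div_eq_div_iff hBpos.ne' (by positivity : (0:ℝ) < 4 * ((N:ℝ) - n) * (b - a) ^ 2).ne', hfrac]
        field_simp
      have hTμ : T = (N:ℝ) * μ := by rw [hμ]; field_simp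
      -- complement sum
      set Sc : (Fin N → ℝ) → ℝ :=
        fun ω => ∑ j : Fin (N - n), ω (Fin.rev (Fin.castLE hmN j)) with hSc
      set Sm : (Fin N → ℝ) → ℝ :=
        fun ω => ∑ j : Fin (N - n), ω (Fin.castLE hmN j) with hSm
      have hsplit : ∀ ω ∈ Ω, Sn ω + Sc ω = (N:ℝ) * μ := by
        intro ω hω
        rw [hSn, hSc]
        rw [sum_split hn hmN ω, ms_sum_coords hxinj hω, ← hT, hTμ]
      -- finishing helper
      have finish : ∀ (F : Finset (Fin N → ℝ)) (e : ℝ),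
          ((F.card : ℝ) ≤ (Ω.card : ℝ) * Real.exp e) →
          e ≤ -((n:ℝ) * t ^ 2 * N) / (4 * ((N:ℝ) - n) * (b - a) ^ 2) →
          ((F.card : ℝ) / (Ω.card : ℝ)
            ≤ Real.exp (-(↑n * t ^ 2) / (4 * (1 - (n : ℝ) / N) * (b - a) ^ 2))) := by
        intro F e h1 h2
        rw [div_le_iff₀ hΩpos, htz]
        calc (F.card : ℝ) ≤ (Ω.card : ℝ) * Real.exp e := h1
          _ ≤ (Ω.card : ℝ) * Real.exp (-((n:ℝ) * t ^ 2 * N) / (4 * ((N:ℝ) - n) * (b - a) ^ 2)) :=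
              mul_le_mul_of_nonneg_left (Real.exp_le_exp.mpr h2) hΩpos.le
          _ = _ := mul_comm _ _
      rcases le_or_gt (2 * n) N with hsp | hsp
      · -- direct case: Chernoff with n samples, s = t/(b-a)^2
        have h2n : 2 * (n:ℝ) ≤ N := by exact_mod_cast hsp
        set s : ℝ := t / (b - a) ^ 2 with hs
        have hs0 : 0 ≤ s := by positivity
        have hch := ms_chernoff hxinj hx1 hx2 n hn hκN s ((n:ℝ) * t) hs0
        rw [← hΩ, ← hT] at hch
        have hexp_eq : -(s * ((n:ℝ) * t)) + n * (s ^ 2 * (b - a) ^ 2 / 2)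
            = -((n:ℝ) * t ^ 2) / (2 * (b - a) ^ 2) := by
          rw [hs]; field_simp; ring
        have hcmp : -((n:ℝ) * t ^ 2) / (2 * (b - a) ^ 2)
            ≤ -((n:ℝ) * t ^ 2 * N) / (4 * ((N:ℝ) - n) * (b - a) ^ 2) := by
          rw [neg_div, neg_div, neg_le_neg_iff]
          rw [div_le_div_iff₀ (by positivity) (by positivity)]
          have h1 : (0:ℝ) ≤ (N:ℝ) - 2 * n := by linarith
          have hkey : 0 ≤ 2 * ((n:ℝ) * t ^ 2 * (b - a) ^ 2) * ((N:ℝ) - 2 * n) :=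
            mul_nonneg (mul_nonneg (by positivity) (by positivity)) h1
          nlinarith [hkey]
        rw [hexp_eq] at hch
        exact ⟨finish _ _ hch.1 hcmp, finish _ _ hch.2 hcmp⟩
      · -- complement case: Chernoff with N - n samples
        have h2n : (N:ℝ) ≤ 2 * n := by exact_mod_cast hsp.le
        set s : ℝ := ((n:ℝ) * t) / (((N - n : ℕ):ℝ) * (b - a) ^ 2) with hs
        have hs0 : 0 ≤ s := by positivity
        have hch := ms_chernoff hxinj hx1 hx2 (N - n) hmN hκN s ((n:ℝ) * t) hs0
        rw [← hΩ, ← hT] at hch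
        have hexp_eq : -(s * ((n:ℝ) * t)) + (N - n : ℕ) * (s ^ 2 * (b - a) ^ 2 / 2)
            = -((n:ℝ) ^ 2 * t ^ 2) / (2 * ((N:ℝ) - n) * (b - a) ^ 2) := by
          rw [hs, hcastm]
          field_simp
          ring
        have hcmp : -((n:ℝ) ^ 2 * t ^ 2) / (2 * ((N:ℝ) - n) * (b - a) ^ 2)
            ≤ -((n:ℝ) * t ^ 2 * N) / (4 * ((N:ℝ) - n) * (b - a) ^ 2) := by
          rw [neg_div, neg_div, neg_le_neg_iff]
          rw [div_le_div_iff₀ (by positivity) (by positivity)]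
          have h1 : (0:ℝ) ≤ 2 * (n:ℝ) - N := by linarith
          have hkey : 0 ≤ 2 * ((n:ℝ) * t ^ 2 * (((N:ℝ) - n) * (b - a) ^ 2)) * (2 * (n:ℝ) - N) :=
            mul_nonneg (mul_nonneg (by positivity) (by positivity)) h1
          nlinarith [hkey]
        -- identify the tails with tails of the complement sums
        have hiff_up : ∀ ω ∈ Ω, (Sn ω - n * μ ≥ (n:ℝ) * t
            ↔ Sm (ω ∘ ⇑(Fin.revPerm : Equiv.Perm (Fin N))) - (N - n : ℕ) * μ ≤ -((n:ℝ) * t)) := by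
          intro ω hω
          have h1 := hsplit ω hω
          have h2 : Sm (ω ∘ ⇑(Fin.revPerm : Equiv.Perm (Fin N))) = Sc ω := rfl
          rw [h2, hcastm]
          constructor <;> intro hh <;> [linarith; linarith]
        have hiff_lo : ∀ ω ∈ Ω, (Sn ω - n * μ ≤ -((n:ℝ) * t)
            ↔ Sm (ω ∘ ⇑(Fin.revPerm : Equiv.Perm (Fin N))) - (N - n : ℕ) * μ ≥ (n:ℝ) * t) := by
          intro ω hω
          have h1 := hsplit ω hω
          have h2 : Sm (ω ∘ ⇑(Fin.revPerm : Equiv.Perm (Fin N))) = Sc ω := rfl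
          rw [h2, hcastm]
          constructor <;> intro hh <;> [linarith; linarith]
        have hcard_up : (Ω.filter fun ω => Sn ω - n * μ ≥ (n:ℝ) * t).card
            = (Ω.filter fun ω => Sm ω - (N - n : ℕ) * μ ≤ -((n:ℝ) * t)).card := by
          rw [Finset.filter_congr hiff_up]
          exact ms_card_filter_comp_perm (x := x) (κ := κ) Fin.revPerm
            (fun ω => Sm ω - (N - n : ℕ) * μ ≤ -((n:ℝ) * t))
        have hcard_lo : (Ω.filter fun ω => Sn ω - n * μ ≤ -((n:ℝ) * t)).card
            = (Ω.filter fun ω => Sm ω - (N - n : ℕ) * μ ≥ (n:ℝ) * t).card := by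
          rw [Finset.filter_congr hiff_lo]
          exact ms_card_filter_comp_perm (x := x) (κ := κ) Fin.revPerm
            (fun ω => Sm ω - (N - n : ℕ) * μ ≥ (n:ℝ) * t)
        constructor
        · refine finish _ _ ?_ hcmp
          rw [hcard_up, ← hexp_eq]
          exact hch.2
        · refine finish _ _ ?_ hcmp
          rw [hcard_lo, ← hexp_eq]
          exact hch.1
  -- conclude, identifying the events
  have base1 : ∀ A : ℝ, (t ≤ 1 / (n:ℝ) * A - μ) ↔ ((n:ℝ) * t ≤ A - (n:ℝ) * μ) := by
    intro A
    rw [le_sub_iff_add_le, le_sub_iff_add_le, one_div, inv_mul_eq_div, le_div_iff₀ hnR]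
    constructor <;> intro h <;> nlinarith [h]
  have base2 : ∀ A : ℝ, (1 / (n:ℝ) * A - μ ≤ -t) ↔ (A - (n:ℝ) * μ ≤ -((n:ℝ) * t)) := by
    intro A
    rw [sub_le_iff_le_add, sub_le_iff_le_add, one_div, inv_mul_eq_div, div_le_iff₀ hnR]
    constructor <;> intro h <;> nlinarith [h]
  have hiff_up : ∀ ω ∈ Ω, ((1 / (n:ℝ)) * (∑ i : Fin n, ω (Fin.castLE hn i)) - μ ≥ t
      ↔ Sn ω - n * μ ≥ (n:ℝ) * t) := fun ω _ => base1 _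
  have hiff_lo : ∀ ω ∈ Ω, ((1 / (n:ℝ)) * (∑ i : Fin n, ω (Fin.castLE hn i)) - μ ≤ -t
      ↔ Sn ω - n * μ ≤ -((n:ℝ) * t)) := fun ω _ => base2 _
  constructor
  · unfold msProbN uprob
    simp only [hE]
    rw [Finset.filter_congr hiff_up]
    exact main.1
  · unfold msProbN uprob
    simp only [hE]
    rw [Finset.filter_congr hiff_lo]
    exact main.2
end
end

section
/- Define g_{n,t}(ω_1,…,ω_n) = (1/n) Σ_{i=1}^n 1_{(−∞,t]}(ω_i) and f(ω) = sup_{t ∈ ℝ} ( g_{n,t}(ω) − E_{κ,n} g_{n,t} ). Then for every t ≥ 0, P_{κ,n}( √n |f − E_{κ,n} f| ≥ t ) ≤ 2 exp(− t² / (4 (1 − n/N))). -/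
open Finset Real
open scoped Classical

noncomputable section

/-- number of coordinates equal to `y` -/
def cnt {M : ℕ} (y : ℝ) (ω : Fin M → ℝ) : ℕ := ∑ i, if ω i = y then 1 else 0

lemma cnt_eq_card {M : ℕ} (y : ℝ) (ω : Fin M → ℝ) :
    (Finset.univ.filter fun i => ω i = y).card = cnt y ω := by
  rw [Finset.card_filter]; rfl

lemma mem_multislice_iff {L M : ℕ} {c : Fin L → ℕ} {x : Fin L → ℝ} {ω : Fin M → ℝ} :
    ω ∈ multislice L M c x ↔ (∀ i, ∃ ℓ, ω i = x ℓ) ∧ ∀ ℓ, cnt (x ℓ) ω = c ℓ := by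
  simp only [multislice, Finset.mem_filter, Fintype.mem_piFinset, Finset.mem_image,
    Finset.mem_univ, true_and, cnt_eq_card]
  constructor
  · rintro ⟨h1, h2⟩
    refine ⟨fun i => ?_, h2⟩
    obtain ⟨ℓ, hℓ⟩ := h1 i
    exact ⟨ℓ, hℓ.symm⟩
  · rintro ⟨h1, h2⟩
    refine ⟨fun i => ?_, h2⟩
    obtain ⟨ℓ, hℓ⟩ := h1 i
    exact ⟨ℓ, hℓ.symm⟩

lemma cnt_comp_perm {M : ℕ} (y : ℝ) (ω : Fin M → ℝ) (σ : Equiv.Perm (Fin M)) :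
    cnt y (ω ∘ σ) = cnt y ω := by
  exact Fintype.sum_equiv σ _ _ fun i => rfl

lemma cnt_cons {M : ℕ} (y a : ℝ) (τ : Fin M → ℝ) :
    cnt y (Fin.cons a τ) = (if a = y then 1 else 0) + cnt y τ := by
  unfold cnt
  rw [Fin.sum_univ_succ]
  simp

lemma cnt_update {M : ℕ} (y v : ℝ) (τ : Fin M → ℝ) (j : Fin M) :
    cnt y (Function.update τ j v) + (if τ j = y then 1 else 0)
      = cnt y τ + (if v = y then 1 else 0) := by
  unfold cnt
  rw [← Finset.sum_erase_add _ _ (Finset.mem_univ j),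
      ← Finset.sum_erase_add _ (fun i => if τ i = y then 1 else 0) (Finset.mem_univ j)]
  have h : ∀ i ∈ Finset.univ.erase j,
      (if Function.update τ j v i = y then 1 else 0) = (if τ i = y then 1 else 0) := by
    intro i hi
    rw [Function.update_of_ne (Finset.mem_erase.1 hi).1]
  rw [Finset.sum_congr rfl h, Function.update_self]
  ring

lemma sum_cnt {L M : ℕ} {x : Fin L → ℝ} (hx : Function.Injective x) (ω : Fin M → ℝ)
    (hω : ∀ i, ∃ ℓ, ω i = x ℓ) : ∑ ℓ, cnt (x ℓ) ω = M := by
  unfold cnt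
  rw [Finset.sum_comm]
  have h : ∀ i : Fin M, ∑ ℓ, (if ω i = x ℓ then 1 else 0) = 1 := by
    intro i
    obtain ⟨ℓ, hℓ⟩ := hω i
    rw [Finset.sum_eq_single ℓ]
    · simp [hℓ]
    · intro b _ hb
      simp only [ite_eq_right_iff]
      intro h
      exact absurd (hx (hℓ.symm.trans h)).symm hb
    · simp
  simp [h]

/-- c minus one at ℓ -/
def dec {L : ℕ} (c : Fin L → ℕ) (ℓ : Fin L) : Fin L → ℕ := fun ℓ' => c ℓ' - if ℓ' = ℓ then 1 else 0

lemma sum_dec {L M : ℕ} {c : Fin L → ℕ} (ℓ : Fin L) (hℓ : 1 ≤ c ℓ)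
    (hc : ∑ ℓ', c ℓ' = M + 1) : ∑ ℓ', dec c ℓ ℓ' = M := by
  have h1 : ∀ ℓ' ∈ Finset.univ.erase ℓ, dec c ℓ ℓ' = c ℓ' := by
    intro ℓ' h'
    simp [dec, (Finset.mem_erase.1 h').1]
  rw [← Finset.sum_erase_add _ _ (Finset.mem_univ ℓ), Finset.sum_congr rfl h1]
  have h2 : dec c ℓ ℓ = c ℓ - 1 := by simp [dec]
  have h3 : (Finset.univ.erase ℓ).sum c + c ℓ = M + 1 := by
    rw [Finset.sum_erase_add Finset.univ c (Finset.mem_univ ℓ)]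
    exact hc
  rw [h2]
  omega

lemma mem_multislice_cons {L M : ℕ} {c : Fin L → ℕ} {x : Fin L → ℝ} (hx : Function.Injective x)
    (hc : ∑ ℓ', c ℓ' = M + 1) {ℓ : Fin L} {τ : Fin M → ℝ}
    (hτ : τ ∈ multislice L M (dec c ℓ) x) :
    Fin.cons (x ℓ) τ ∈ multislice L (M + 1) c x ∧ 1 ≤ c ℓ := by
  rw [mem_multislice_iff] at hτ ⊢
  obtain ⟨h1, h2⟩ := hτ
  have hs : ∑ ℓ', cnt (x ℓ') τ = M := sum_cnt hx τ h1
  have hcℓ : 1 ≤ c ℓ := by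
    by_contra hcon
    push_neg at hcon
    have h0 : c ℓ = 0 := by omega
    have hdec : ∀ ℓ', dec c ℓ ℓ' = c ℓ' := by
      intro ℓ'
      by_cases hh : ℓ' = ℓ
      · subst hh; simp [dec, h0]
      · simp [dec, hh]
    have : (M : ℕ) + 1 = M := by
      rw [← hc, ← hs]
      exact (Finset.sum_congr rfl fun ℓ' _ => by rw [h2 ℓ', hdec ℓ']).symm
    omega
  refine ⟨⟨?_, ?_⟩, hcℓ⟩
  · intro i
    refine Fin.cases ⟨ℓ, rfl⟩ (fun j => ?_) i
    obtain ⟨ℓ', h⟩ := h1 j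
    exact ⟨ℓ', by simpa using h⟩
  · intro ℓ'
    rw [cnt_cons, h2 ℓ']
    by_cases hh : ℓ' = ℓ
    · subst hh
      have : dec c ℓ' ℓ' = c ℓ' - 1 := by simp [dec]
      rw [this, if_pos rfl]
      omega
    · have hne : ¬ x ℓ = x ℓ' := fun h => hh (hx h).symm
      have : dec c ℓ ℓ' = c ℓ' := by simp [dec, hh]
      rw [this, if_neg hne]
      omega

lemma mem_multislice_tail {L M : ℕ} {c : Fin L → ℕ} {x : Fin L → ℝ} (hx : Function.Injective x)
    {ω : Fin (M + 1) → ℝ} (hω : ω ∈ multislice L (M + 1) c x) :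
    ∃ ℓ, ω 0 = x ℓ ∧ Fin.tail ω ∈ multislice L M (dec c ℓ) x := by
  rw [mem_multislice_iff] at hω
  obtain ⟨h1, h2⟩ := hω
  obtain ⟨ℓ, hℓ⟩ := h1 0
  refine ⟨ℓ, hℓ, ?_⟩
  rw [mem_multislice_iff]
  refine ⟨fun i => h1 i.succ, fun ℓ' => ?_⟩
  have hcons : ω = Fin.cons (x ℓ) (Fin.tail ω) := by
    rw [← hℓ]; exact (Fin.cons_self_tail ω).symm
  have key : (if x ℓ = x ℓ' then 1 else 0) + cnt (x ℓ') (Fin.tail ω) = c ℓ' := by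
    rw [← cnt_cons, ← hcons]
    exact h2 ℓ'
  by_cases hh : ℓ' = ℓ
  · subst hh
    rw [if_pos rfl] at key
    have : dec c ℓ' ℓ' = c ℓ' - 1 := by simp [dec]
    rw [this]
    omega
  · have hne : ¬ x ℓ = x ℓ' := fun h => hh (hx h).symm
    rw [if_neg hne] at key
    have : dec c ℓ ℓ' = c ℓ' := by simp [dec, hh]
    rw [this]
    omega

lemma multislice_nonempty {L : ℕ} {x : Fin L → ℝ} (hx : Function.Injective x) :
    ∀ (M : ℕ) (c : Fin L → ℕ), (∑ ℓ, c ℓ = M) → (multislice L M c x).Nonempty := by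
  intro M
  induction M with
  | zero =>
    intro c hc
    refine ⟨fun i => i.elim0, ?_⟩
    rw [mem_multislice_iff]
    have h0 : ∀ ℓ, c ℓ = 0 := fun ℓ => Finset.sum_eq_zero_iff.1 hc ℓ (Finset.mem_univ ℓ)
    exact ⟨fun i => i.elim0, fun ℓ => by simp [cnt, h0]⟩
  | succ M ih =>
    intro c hc
    have hex : ∃ ℓ, 1 ≤ c ℓ := by
      by_contra h
      push_neg at h
      have h0 : ∀ ℓ, c ℓ = 0 := fun ℓ => by have := h ℓ; omega
      simp [h0] at hc
    obtain ⟨ℓ, hℓ⟩ := hex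
    obtain ⟨τ, hτ⟩ := ih (dec c ℓ) (sum_dec ℓ hℓ hc)
    exact ⟨Fin.cons (x ℓ) τ, (mem_multislice_cons hx hc hτ).1⟩

/-- chord bound: for `|d| ≤ c`, `exp (lam * d) ≤ cosh (lam*c) + (d/c) * sinh (lam*c)`. -/
lemma exp_chord_s7 (lam c d : ℝ) (hc : 0 < c) (hd : |d| ≤ c) :
    Real.exp (lam * d) ≤ Real.cosh (lam * c) + (d / c) * Real.sinh (lam * c) := by
  have h1 : -c ≤ d := (abs_le.1 hd).1
  have h2 : d ≤ c := (abs_le.1 hd).2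
  set θ : ℝ := (c + d) / (2 * c) with hθ
  have hθ0 : 0 ≤ θ := div_nonneg (by linarith) (by positivity)
  have hθ1 : 0 ≤ 1 - θ := by
    rw [hθ]
    rw [sub_nonneg, div_le_one (by positivity)]
    linarith
  have key := convexOn_exp.2 (Set.mem_univ (-(lam * c))) (Set.mem_univ (lam * c))
    hθ1 hθ0 (by ring)
  have harg : (1 - θ) • (-(lam * c)) + θ • (lam * c) = lam * d := by
    simp only [smul_eq_mul, hθ]
    field_simp
    ring
  rw [harg] at key
  refine key.trans_eq ?_
  rw [Real.cosh_eq, Real.sinh_eq, hθ, smul_eq_mul, smul_eq_mul]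
  field_simp
  ring

lemma weighted_exp_le {ι : Type*} [Fintype ι] (w d : ι → ℝ) (c lam : ℝ)
    (hw : ∀ i, 0 ≤ w i) (hw1 : ∑ i, w i = 1) (hwd : ∑ i, w i * d i = 0) (hc : 0 ≤ c)
    (hd : ∀ i, w i ≠ 0 → |d i| ≤ c) :
    ∑ i, w i * Real.exp (lam * d i) ≤ Real.exp (lam ^ 2 * c ^ 2 / 2) := by
  rcases eq_or_lt_of_le hc with hc0 | hcpos
  · -- c = 0
    have : ∀ i, w i * Real.exp (lam * d i) = w i := by
      intro i
      by_cases h : w i = 0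
      · simp [h]
      · have : d i = 0 := by
          have := hd i h
          rw [← hc0] at this
          exact abs_eq_zero.1 (le_antisymm this (abs_nonneg _))
        simp [this]
    rw [Finset.sum_congr rfl fun i _ => this i, hw1]
    exact Real.one_le_exp (by positivity)
  · have pointwise : ∀ i, w i * Real.exp (lam * d i)
        ≤ w i * (Real.cosh (lam * c) + (d i / c) * Real.sinh (lam * c)) := by
      intro i
      by_cases h : w i = 0
      · simp [h]
      · exact mul_le_mul_of_nonneg_left (exp_chord_s7 lam c (d i) hcpos (hd i h)) (hw i)
    calc ∑ i, w i * Real.exp (lam * d i)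
        ≤ ∑ i, w i * (Real.cosh (lam * c) + (d i / c) * Real.sinh (lam * c)) :=
          Finset.sum_le_sum fun i _ => pointwise i
      _ = Real.cosh (lam * c) * ∑ i, w i
          + (Real.sinh (lam * c) / c) * ∑ i, w i * d i := by
          rw [Finset.mul_sum, Finset.mul_sum, ← Finset.sum_add_distrib]
          refine Finset.sum_congr rfl fun i _ => ?_
          field_simp
      _ = Real.cosh (lam * c) := by rw [hw1, hwd]; ring
      _ ≤ Real.exp ((lam * c) ^ 2 / 2) := Real.cosh_le_exp_half_sq _
      _ = Real.exp (lam ^ 2 * c ^ 2 / 2) := by rw [mul_pow]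

lemma finset_chernoff {α : Type*} (Ω : Finset α) (X : α → ℝ) (u lam : ℝ) (hlam : 0 ≤ lam) :
    ((Ω.filter fun ω => u ≤ X ω).card : ℝ) * Real.exp (lam * u)
      ≤ ∑ ω ∈ Ω, Real.exp (lam * X ω) := by
  calc ((Ω.filter fun ω => u ≤ X ω).card : ℝ) * Real.exp (lam * u)
      = ∑ _ω ∈ Ω.filter fun ω => u ≤ X ω, Real.exp (lam * u) := by
        rw [Finset.sum_const, nsmul_eq_mul]
    _ ≤ ∑ ω ∈ Ω.filter fun ω => u ≤ X ω, Real.exp (lam * X ω) := by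
        refine Finset.sum_le_sum fun ω hω => ?_
        have := (Finset.mem_filter.1 hω).2
        exact Real.exp_le_exp.2 (mul_le_mul_of_nonneg_left this hlam)
    _ ≤ ∑ ω ∈ Ω, Real.exp (lam * X ω) :=
        Finset.sum_le_sum_of_subset_of_nonneg (Finset.filter_subset _ _)
          fun ω _ _ => (Real.exp_pos _).le

/-- variance proxy for the Serfling martingale -/
def Wvar (m : ℕ) : ℕ → ℝ
  | 0 => 0
  | (r + 1) => ((m : ℝ) / ((m : ℝ) + r)) ^ 2 + Wvar m r

lemma Wvar_nonneg (m r : ℕ) : 0 ≤ Wvar m r := by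
  induction r with
  | zero => simp [Wvar]
  | succ r ih => simp only [Wvar]; positivity

lemma Wvar_le' (m : ℕ) (hm : 1 ≤ m) (r : ℕ) :
    Wvar m r ≤ 2 * (m : ℝ) ^ 2 * (1 / m - 1 / ((m : ℝ) + r)) := by
  induction r with
  | zero => simp [Wvar]
  | succ r ih =>
    have hm0 : (0 : ℝ) < m := by exact_mod_cast hm
    have hmr : (0 : ℝ) < (m : ℝ) + r := by positivity
    have hmr1 : (0 : ℝ) < (m : ℝ) + r + 1 := by positivity
    have head : ((m : ℝ) / ((m : ℝ) + r)) ^ 2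
        ≤ 2 * (m : ℝ) ^ 2 * (1 / ((m : ℝ) + r) - 1 / ((m : ℝ) + r + 1)) := by
      rw [div_pow]
      rw [div_le_iff₀ (by positivity)]
      have expand : 2 * (m : ℝ) ^ 2 * (1 / ((m : ℝ) + r) - 1 / ((m : ℝ) + r + 1))
          = 2 * (m : ℝ) ^ 2 / (((m : ℝ) + r) * (((m : ℝ) + r) + 1)) := by
        rw [div_sub_div _ _ (ne_of_gt hmr) (ne_of_gt hmr1)]
        rw [mul_div_assoc']
        congr 1
        ring
      rw [expand, div_mul_eq_mul_div, le_div_iff₀ (by positivity)]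
      have hm1 : (0:ℝ) ≤ (m : ℝ) + r - 1 := by
        have : (1:ℝ) ≤ m := by exact_mod_cast hm
        linarith
      nlinarith [mul_nonneg (mul_nonneg (sq_nonneg (m:ℝ)) hmr.le) hm1]
    have : Wvar m (r + 1) = ((m : ℝ) / ((m : ℝ) + r)) ^ 2 + Wvar m r := rfl
    rw [this]
    have := add_le_add head ih
    refine this.trans_eq ?_
    push_cast
    ring

lemma Wvar_le (m r : ℕ) (hm : 1 ≤ m) : Wvar m r ≤ 2 * m * r / ((m : ℝ) + r) := by
  refine (Wvar_le' m hm r).trans_eq ?_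
  have hm0 : (0 : ℝ) < m := by exact_mod_cast hm
  have hmr : (0 : ℝ) < (m : ℝ) + r := by positivity
  field_simp
  ring

-- ## new material

lemma sum_eq_of_mem {L M : ℕ} {c : Fin L → ℕ} {x : Fin L → ℝ} (hx : Function.Injective x)
    {ω : Fin M → ℝ} (hω : ω ∈ multislice L M c x) : ∑ ℓ, c ℓ = M := by
  rw [mem_multislice_iff] at hω
  rw [← sum_cnt hx ω hω.1]
  exact Finset.sum_congr rfl fun ℓ _ => (hω.2 ℓ).symm

lemma comp_perm_mem {L M : ℕ} {c : Fin L → ℕ} {x : Fin L → ℝ}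
    {ω : Fin M → ℝ} (hω : ω ∈ multislice L M c x) (σ : Equiv.Perm (Fin M)) :
    ω ∘ σ ∈ multislice L M c x := by
  rw [mem_multislice_iff] at hω ⊢
  exact ⟨fun i => hω.1 (σ i), fun ℓ => (cnt_comp_perm _ ω σ).trans (hω.2 ℓ)⟩

lemma ms_decomp {L M : ℕ} {c : Fin L → ℕ} {x : Fin L → ℝ} (hx : Function.Injective x)
    (hc : ∑ ℓ, c ℓ = M + 1) (H : (Fin (M + 1) → ℝ) → ℝ) :
    ∑ ω ∈ multislice L (M + 1) c x, H ω
      = ∑ ℓ, ∑ τ ∈ multislice L M (dec c ℓ) x, H (Fin.cons (x ℓ) τ) := by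
  have hset : multislice L (M + 1) c x
      = Finset.univ.biUnion (fun ℓ => (multislice L M (dec c ℓ) x).image (Fin.cons (x ℓ))) := by
    ext ω
    simp only [Finset.mem_biUnion, Finset.mem_image, Finset.mem_univ, true_and]
    constructor
    · intro hω
      obtain ⟨ℓ, hℓ, htail⟩ := mem_multislice_tail hx hω
      exact ⟨ℓ, Fin.tail ω, htail, by rw [← hℓ]; exact Fin.cons_self_tail ω⟩
    · rintro ⟨ℓ, τ, hτ, rfl⟩
      exact (mem_multislice_cons hx hc hτ).1
  rw [hset, Finset.sum_biUnion]
  · refine Finset.sum_congr rfl fun ℓ _ => ?_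
    rw [Finset.sum_image]
    intro τ _ τ' _ h
    have := congrArg Fin.tail h
    rwa [Fin.tail_cons, Fin.tail_cons] at this
  · intro ℓ _ ℓ' _ hne
    simp only [Function.onFun]
    rw [Finset.disjoint_left]
    rintro ω hω hω'
    obtain ⟨τ, _, rfl⟩ := Finset.mem_image.1 hω
    obtain ⟨τ', _, h⟩ := Finset.mem_image.1 hω'
    have : x ℓ' = x ℓ := by
      have := congrFun h 0
      simpa using this
    exact hne (hx this).symm

lemma sum_eq_card_mul_uexpect {α : Type*} (Ω : Finset α) (f : α → ℝ) :
    ∑ ω ∈ Ω, f ω = (Ω.card : ℝ) * uexpect Ω f := by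
  rcases Finset.eq_empty_or_nonempty Ω with h | h
  · simp [h, uexpect]
  · rw [uexpect, mul_div_cancel₀]
    exact_mod_cast Finset.card_ne_zero_of_mem h.choose_spec

lemma uexpect_const {α : Type*} {Ω : Finset α} (h : Ω.Nonempty) (a : ℝ) :
    uexpect Ω (fun _ => a) = a := by
  rw [uexpect, Finset.sum_const, nsmul_eq_mul]
  have : (Ω.card : ℝ) ≠ 0 := by
    exact_mod_cast Finset.card_ne_zero_of_mem h.choose_spec
  field_simp

/-- projection onto first r coordinates -/
def prj {M : ℕ} (r : ℕ) (hr : r ≤ M) (ω : Fin M → ℝ) : Fin r → ℝ := fun i => ω (Fin.castLE hr i)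

lemma prj_cons {M r : ℕ} (hr : r + 1 ≤ M + 1) (a : ℝ) (τ : Fin M → ℝ) :
    prj (r + 1) hr (Fin.cons a τ) = Fin.cons a (prj r (Nat.succ_le_succ_iff.1 hr) τ) := by
  funext i
  refine Fin.cases ?_ (fun j => ?_) i
  · rfl
  · unfold prj
    simp only [Fin.cons_succ]
    exact Fin.cons_succ (α := fun _ => ℝ) a τ (Fin.castLE (Nat.succ_le_succ_iff.1 hr) j)

lemma card_filter_lt_fin (M r : ℕ) (hr : r ≤ M) :
    (Finset.univ.filter fun j : Fin M => (j : ℕ) < r).card = r := by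
  rw [Finset.card_filter]
  rw [Fin.sum_univ_eq_sum_range (fun j => if j < r then 1 else 0) M]
  rw [← Finset.card_filter]
  have : (Finset.range M).filter (fun i => i < r) = Finset.range r := by
    ext i
    simp only [Finset.mem_filter, Finset.mem_range]
    omega
  rw [this, Finset.card_range]

lemma card_filter_ge_fin (M r : ℕ) (hr : r ≤ M) :
    (Finset.univ.filter fun j : Fin M => r ≤ (j : ℕ)).card = M - r := by
  have h1 := card_filter_lt_fin M r hr
  have h2 := Finset.card_filter_add_card_filter_not
    (s := (Finset.univ : Finset (Fin M))) (p := fun j : Fin M => (j : ℕ) < r)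
  simp only [not_lt, Finset.card_univ, Fintype.card_fin] at h2
  omega

-- ## 3b

/-- replacing an occurrence of `x ℓ'` by `x ℓ` maps `multislice (dec c ℓ)` to
`multislice (dec c ℓ')` -/
lemma update_mem_ms {L M : ℕ} {c : Fin L → ℕ} {x : Fin L → ℝ} (hx : Function.Injective x)
    {ℓ ℓ' : Fin L} (hne : ℓ ≠ ℓ') (hq : 1 ≤ c ℓ) (hp : 1 ≤ c ℓ')
    {τ : Fin M → ℝ} (hτ : τ ∈ multislice L M (dec c ℓ) x) {j : Fin M} (hj : τ j = x ℓ') :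
    Function.update τ j (x ℓ) ∈ multislice L M (dec c ℓ') x := by
  rw [mem_multislice_iff] at hτ ⊢
  obtain ⟨h1, h2⟩ := hτ
  constructor
  · intro i
    by_cases h : i = j
    · subst h; exact ⟨ℓ, Function.update_self _ _ _⟩
    · rw [Function.update_of_ne h]; exact h1 i
  · intro ℓ''
    have key := cnt_update (x ℓ'') (x ℓ) τ j
    rw [hj] at key
    have h2' := h2 ℓ''
    by_cases ha : ℓ'' = ℓ
    · subst ha
      have e1 : ¬ x ℓ' = x ℓ'' := fun h => hne (hx h).symm
      rw [if_neg e1, if_pos rfl] at key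
      have e2 : dec c ℓ'' ℓ'' = c ℓ'' - 1 := by simp [dec]
      have e3 : dec c ℓ'' ℓ' = c ℓ' := by simp [dec, hne.symm]  -- unused
      rw [e2] at h2'
      have e4 : dec c ℓ' ℓ'' = c ℓ'' := by simp [dec, (by exact hne : ℓ'' ≠ ℓ')]
      rw [e4]
      omega
    · by_cases hb : ℓ'' = ℓ'
      · subst hb
        rw [if_pos rfl, if_neg (fun h => ha (hx h).symm)] at key
        have e2 : dec c ℓ ℓ'' = c ℓ'' := by simp [dec, ha]
        rw [e2] at h2'
        have e4 : dec c ℓ'' ℓ'' = c ℓ'' - 1 := by simp [dec]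
        rw [e4]
        omega
      · rw [if_neg (fun h => hb (hx h).symm), if_neg (fun h => ha (hx h).symm)] at key
        have e2 : dec c ℓ ℓ'' = c ℓ'' := by simp [dec, ha]
        have e4 : dec c ℓ' ℓ'' = c ℓ'' := by simp [dec, hb]
        rw [e2] at h2'
        rw [e4]
        omega

/-- sums over the "pair set" reduce to weighted sums -/
lemma pair_sum {L M : ℕ} {cA : Fin L → ℕ} {x : Fin L → ℝ} {b : ℝ} (p : ℕ)
    (hcnt : ∀ τ ∈ multislice L M cA x, cnt b τ = p) (h : (Fin M → ℝ) → ℝ) :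
    ∑ z ∈ ((multislice L M cA x) ×ˢ (Finset.univ : Finset (Fin M))).filter
        (fun z => z.1 z.2 = b), h z.1
      = (p : ℝ) * ∑ τ ∈ multislice L M cA x, h τ := by
  rw [Finset.sum_filter, Finset.sum_product]
  rw [Finset.mul_sum]
  refine Finset.sum_congr rfl fun τ hτ => ?_
  have : ∀ j : Fin M, (if τ j = b then h τ else 0) = (if τ j = b then (1:ℝ) else 0) * h τ := by
    intro j; split <;> simp
  rw [Finset.sum_congr rfl fun j _ => this j, ← Finset.sum_mul]
  have : ∑ j : Fin M, (if τ j = b then (1:ℝ) else 0) = ((cnt b τ : ℕ) : ℝ) := by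
    rw [cnt]; push_cast; rfl
  rw [this, hcnt τ hτ]

/-- the count of positions `j ≥ r` holding value `b`, summed over the multislice -/
lemma position_count {L M : ℕ} {cA : Fin L → ℕ} {x : Fin L → ℝ} {b : ℝ} (p r : ℕ) (hr : r ≤ M)
    (hM : 1 ≤ M) (hcnt : ∀ τ ∈ multislice L M cA x, cnt b τ = p) :
    ∃ K : ℕ, (∀ j : Fin M, ((multislice L M cA x).filter (fun τ => τ j = b)).card = K)
      ∧ M * K = p * (multislice L M cA x).card := by
  set A := multislice L M cA x
  set j₀ : Fin M := ⟨0, hM⟩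
  set K := (A.filter (fun τ => τ j₀ = b)).card with hK
  have hconst : ∀ j : Fin M, (A.filter (fun τ => τ j = b)).card = K := by
    intro j
    refine Finset.card_nbij' (fun τ => τ ∘ Equiv.swap j j₀) (fun τ => τ ∘ Equiv.swap j j₀)
      ?_ ?_ ?_ ?_
    · intro τ hτ
      rw [Finset.mem_coe, Finset.mem_filter] at hτ ⊢
      refine ⟨comp_perm_mem hτ.1 _, ?_⟩
      show τ (Equiv.swap j j₀ j₀) = b
      rw [Equiv.swap_apply_right]
      exact hτ.2
    · intro τ hτ
      rw [Finset.mem_coe, Finset.mem_filter] at hτ ⊢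
      refine ⟨comp_perm_mem hτ.1 _, ?_⟩
      show τ (Equiv.swap j j₀ j) = b
      rw [Equiv.swap_apply_left]
      exact hτ.2
    · intro τ _
      funext i
      show τ (Equiv.swap j j₀ (Equiv.swap j j₀ i)) = τ i
      rw [Equiv.swap_apply_self]
    · intro τ _
      funext i
      show τ (Equiv.swap j j₀ (Equiv.swap j j₀ i)) = τ i
      rw [Equiv.swap_apply_self]
  refine ⟨K, hconst, ?_⟩
  have h1 : ∑ j : Fin M, (A.filter (fun τ => τ j = b)).card = M * K := by
    rw [Finset.sum_congr rfl fun j _ => hconst j, Finset.sum_const, Finset.card_univ,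
      Fintype.card_fin, smul_eq_mul]
  have h2 : ∑ j : Fin M, (A.filter (fun τ => τ j = b)).card = ∑ τ ∈ A, cnt b τ := by
    simp only [Finset.card_filter]
    rw [Finset.sum_comm]
    rfl
  rw [← h1, h2, Finset.sum_congr rfl fun τ hτ => hcnt τ hτ, Finset.sum_const, smul_eq_mul]
  ring

lemma pointwise_swap {r M : ℕ} (hr : r ≤ M) {β : ℝ}
    (F : (Fin (r + 1) → ℝ) → ℝ)
    (Hsym : ∀ (ρ : Fin (r + 1) → ℝ) (σ : Equiv.Perm (Fin (r + 1))), F (ρ ∘ σ) = F ρ)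
    (Hlip : ∀ (ρ : Fin (r + 1) → ℝ) (i : Fin (r + 1)) (v : ℝ),
      |F ρ - F (Function.update ρ i v)| ≤ β)
    (a b : ℝ) (τ : Fin M → ℝ) (j : Fin M) (hj : τ j = b) :
    |F (Fin.cons a (prj r hr τ)) - F (Fin.cons b (prj r hr (Function.update τ j a)))|
      ≤ if r ≤ (j : ℕ) then β else 0 := by
  by_cases hcase : (j : ℕ) < r
  · -- the two samples are permutations of each other
    rw [if_neg (by omega)]
    set j' : Fin r := ⟨(j : ℕ), hcase⟩ with hj'
    have hcast : Fin.castLE hr j' = j := by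
      apply Fin.ext; rfl
    have hprojupd : prj r hr (Function.update τ j a) = Function.update (prj r hr τ) j' a := by
      funext i
      by_cases h : i = j'
      · subst h
        show Function.update τ j a (Fin.castLE hr j') = _
        rw [hcast, Function.update_self, Function.update_self]
      · have hne : Fin.castLE hr i ≠ j := by
          intro hcon
          apply h
          apply Fin.ext
          have := congrArg Fin.val hcon
          simpa using this
        show Function.update τ j a (Fin.castLE hr i) = _
        rw [Function.update_of_ne hne, Function.update_of_ne h]
        rfl
    set ρ := prj r hr τ with hρdef
    have hρ : ρ j' = b := by
      show τ (Fin.castLE hr j') = b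
      rw [hcast, hj]
    have hfun : (Fin.cons a ρ : Fin (r+1) → ℝ) ∘ (Equiv.swap (0 : Fin (r+1)) j'.succ)
        = Fin.cons b (Function.update ρ j' a) := by
      funext i
      refine Fin.cases ?_ (fun k => ?_) i
      · rw [Function.comp_apply, Equiv.swap_apply_left, Fin.cons_succ, hρ, Fin.cons_zero]
      · rw [Function.comp_apply, Fin.cons_succ]
        by_cases hk : k = j'
        · subst hk
          rw [Equiv.swap_apply_right, Fin.cons_zero, Function.update_self]
        · have h1 : (k.succ : Fin (r+1)) ≠ 0 := Fin.succ_ne_zero k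
          have h2 : k.succ ≠ j'.succ := fun h => hk (Fin.succ_injective _ h)
          rw [Equiv.swap_apply_of_ne_of_ne h1 h2, Fin.cons_succ, Function.update_of_ne hk]
    rw [hprojupd, ← hfun, Hsym]
    simp
  · -- replacing one coordinate
    push_neg at hcase
    rw [if_pos hcase]
    have hprojupd : prj r hr (Function.update τ j a) = prj r hr τ := by
      funext i
      have hne : Fin.castLE hr i ≠ j := by
        intro hcon
        have := congrArg Fin.val hcon
        simp at this
        omega
      show Function.update τ j a (Fin.castLE hr i) = _
      rw [Function.update_of_ne hne]
      rfl
    rw [hprojupd]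
    have hupd : (Fin.cons b (prj r hr τ) : Fin (r+1) → ℝ)
        = Function.update (Fin.cons a (prj r hr τ)) 0 b := by
      funext i
      refine Fin.cases ?_ (fun k => ?_) i
      · rw [Fin.cons_zero, Function.update_self]
      · rw [Fin.cons_succ, Function.update_of_ne (Fin.succ_ne_zero k), Fin.cons_succ]
    rw [hupd]
    exact Hlip _ 0 b

lemma pair_bound {L M r : ℕ} {c : Fin L → ℕ} {x : Fin L → ℝ} (hx : Function.Injective x)
    (hc : ∑ ℓ'', c ℓ'' = M + 1) (hr : r ≤ M) {β : ℝ} (hβ : 0 ≤ β)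
    {F : (Fin (r + 1) → ℝ) → ℝ}
    (Hsym : ∀ (ρ : Fin (r + 1) → ℝ) (σ : Equiv.Perm (Fin (r + 1))), F (ρ ∘ σ) = F ρ)
    (Hlip : ∀ (ρ : Fin (r + 1) → ℝ) (i : Fin (r + 1)) (v : ℝ),
      |F ρ - F (Function.update ρ i v)| ≤ β)
    {ℓ ℓ' : Fin L}
    (hA : (multislice L M (dec c ℓ) x).Nonempty)
    (hB : (multislice L M (dec c ℓ') x).Nonempty) :
    |uexpect (multislice L M (dec c ℓ) x) (fun τ => F (Fin.cons (x ℓ) (prj r hr τ)))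
      - uexpect (multislice L M (dec c ℓ') x) (fun τ => F (Fin.cons (x ℓ') (prj r hr τ)))|
      ≤ β * ((M - r : ℕ) : ℝ) / M := by
  by_cases hll0 : ℓ = ℓ'
  · subst hll0
    rw [sub_self, abs_zero]
    apply div_nonneg _ (Nat.cast_nonneg M)
    exact mul_nonneg hβ (Nat.cast_nonneg _)
  have hll : ℓ ≠ ℓ' := hll0
  have hll' : ℓ' ≠ ℓ := Ne.symm hll
  -- setup
  set A := multislice L M (dec c ℓ) x with hAdef
  set B := multislice L M (dec c ℓ') x with hBdef
  obtain ⟨τA, hτA⟩ := hA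
  obtain ⟨τB, hτB⟩ := hB
  have keyA : ∑ ℓ'', dec c ℓ ℓ'' = M := sum_eq_of_mem hx hτA
  have keyB : ∑ ℓ'', dec c ℓ' ℓ'' = M := sum_eq_of_mem hx hτB
  have hq : 1 ≤ c ℓ := by
    by_contra h
    push_neg at h
    have h0 : c ℓ = 0 := by omega
    have : dec c ℓ = c := by
      funext ℓ''
      by_cases hh : ℓ'' = ℓ
      · subst hh; simp [dec, h0]
      · simp [dec, hh]
    rw [this] at keyA
    omega
  have hp : 1 ≤ c ℓ' := by
    by_contra h
    push_neg at h
    have h0 : c ℓ' = 0 := by omega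
    have : dec c ℓ' = c := by
      funext ℓ''
      by_cases hh : ℓ'' = ℓ'
      · subst hh; simp [dec, h0]
      · simp [dec, hh]
    rw [this] at keyB
    omega
  have hM : 1 ≤ M := by
    by_contra h
    push_neg at h
    have hM0 : M = 0 := by omega
    subst hM0
    have := Finset.sum_eq_zero_iff.1 keyA ℓ' (Finset.mem_univ ℓ')
    have hd : dec c ℓ ℓ' = c ℓ' := by simp [dec, hll']
    omega
  have hcntA : ∀ τ ∈ A, cnt (x ℓ') τ = c ℓ' := by
    intro τ hτ
    have := (mem_multislice_iff.1 hτ).2 ℓ'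
    rwa [show dec c ℓ ℓ' = c ℓ' by simp [dec, hll']] at this
  have hcntB : ∀ τ ∈ B, cnt (x ℓ) τ = c ℓ := by
    intro τ hτ
    have := (mem_multislice_iff.1 hτ).2 ℓ
    rwa [show dec c ℓ' ℓ = c ℓ by simp [dec, hll]] at this
  set a := x ℓ with hadef
  set b := x ℓ' with hbdef
  set PA := (A ×ˢ (Finset.univ : Finset (Fin M))).filter (fun z => z.1 z.2 = b) with hPAdef
  set PB := (B ×ˢ (Finset.univ : Finset (Fin M))).filter (fun z => z.1 z.2 = a) with hPBdef
  -- the bijection between pair sets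
  have himem : ∀ z ∈ PA, (Function.update z.1 z.2 a, z.2) ∈ PB := by
    rintro ⟨τ, j⟩ hz
    rw [hPAdef, Finset.mem_filter, Finset.mem_product] at hz
    rw [hPBdef, Finset.mem_filter, Finset.mem_product]
    obtain ⟨⟨h1, -⟩, h2⟩ := hz
    exact ⟨⟨update_mem_ms hx hll hq hp h1 h2, Finset.mem_univ _⟩, Function.update_self _ _ _⟩
  have hjmem : ∀ z ∈ PB, (Function.update z.1 z.2 b, z.2) ∈ PA := by
    rintro ⟨τ, j⟩ hz
    rw [hPBdef, Finset.mem_filter, Finset.mem_product] at hz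
    rw [hPAdef, Finset.mem_filter, Finset.mem_product]
    obtain ⟨⟨h1, -⟩, h2⟩ := hz
    exact ⟨⟨update_mem_ms hx (Ne.symm hll) hp hq h1 h2, Finset.mem_univ _⟩,
      Function.update_self _ _ _⟩
  have hleft : ∀ z ∈ PA, (Function.update (Function.update z.1 z.2 a) z.2 b, z.2) = z := by
    rintro ⟨τ, j⟩ hz
    rw [hPAdef, Finset.mem_filter] at hz
    have : Function.update (Function.update τ j a) j b = τ := by
      rw [Function.update_idem, ← hz.2, Function.update_eq_self]
    rw [this]
  have hright : ∀ z ∈ PB, (Function.update (Function.update z.1 z.2 b) z.2 a, z.2) = z := by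
    rintro ⟨τ, j⟩ hz
    rw [hPBdef, Finset.mem_filter] at hz
    have : Function.update (Function.update τ j b) j a = τ := by
      rw [Function.update_idem, ← hz.2, Function.update_eq_self]
    rw [this]
  -- transport of sums
  have transport : ∀ g : (Fin M → ℝ) → ℝ,
      ∑ z ∈ PA, g (Function.update z.1 z.2 a) = ∑ z ∈ PB, g z.1 := by
    intro g
    refine Finset.sum_nbij' (fun z => (Function.update z.1 z.2 a, z.2))
      (fun z => (Function.update z.1 z.2 b, z.2)) himem hjmem hleft hright ?_
    rintro ⟨τ, j⟩ _
    rfl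
  set h1 : (Fin M → ℝ) → ℝ := fun τ => F (Fin.cons a (prj r hr τ)) with hh1
  set h2 : (Fin M → ℝ) → ℝ := fun τ => F (Fin.cons b (prj r hr τ)) with hh2
  have sumPA_h1 : ∑ z ∈ PA, h1 z.1 = (c ℓ' : ℝ) * ∑ τ ∈ A, h1 τ := pair_sum (c ℓ') hcntA h1
  have sumPA_h2 : ∑ z ∈ PA, h2 (Function.update z.1 z.2 a) = (c ℓ : ℝ) * ∑ τ ∈ B, h2 τ := by
    rw [transport h2]
    exact pair_sum (c ℓ) hcntB h2
  have cardPA : ∑ z ∈ PA, (1 : ℝ) = (c ℓ' : ℝ) * A.card := by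
    rw [pair_sum (c ℓ') hcntA (fun _ => (1:ℝ))]
    simp [hAdef]
  have cardPB : ∑ z ∈ PA, (1 : ℝ) = (c ℓ : ℝ) * B.card := by
    have : ∑ z ∈ PA, (1:ℝ) = ∑ z ∈ PB, (1:ℝ) := transport (fun _ => (1:ℝ))
    rw [this, pair_sum (c ℓ) hcntB (fun _ => (1:ℝ))]
    simp [hBdef]
  have cardeq : (c ℓ' : ℝ) * A.card = (c ℓ : ℝ) * B.card := by rw [← cardPA, cardPB]
  -- positivity
  have hcA : 0 < A.card := Finset.card_pos.2 ⟨τA, hτA⟩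
  have hcB : 0 < B.card := Finset.card_pos.2 ⟨τB, hτB⟩
  have hCA : (0 : ℝ) < (c ℓ' : ℝ) * A.card := by
    apply mul_pos
    · exact_mod_cast hp
    · exact_mod_cast hcA
  -- position count
  obtain ⟨K, hKconst, hKsum⟩ := position_count (cA := dec c ℓ) (b := b) (c ℓ') r hr hM hcntA
  rw [← hAdef] at hKsum hKconst
  have hK1 : 1 ≤ K := by
    rcases Nat.eq_zero_or_pos K with h | h
    · exfalso
      rw [h, Nat.mul_zero] at hKsum
      have h2 : 0 < c ℓ' * A.card := Nat.mul_pos hp hcA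
      omega
    · exact h
  -- the main bound on the sum of differences
  have bound_sum : ∑ z ∈ PA, |h1 z.1 - h2 (Function.update z.1 z.2 a)|
      ≤ β * (((M - r) * K : ℕ) : ℝ) := by
    have step0 : ∀ z ∈ PA, |h1 z.1 - h2 (Function.update z.1 z.2 a)|
        ≤ if r ≤ (z.2 : ℕ) then β else 0 := by
      rintro ⟨τ, j⟩ hz
      rw [hPAdef, Finset.mem_filter] at hz
      exact pointwise_swap hr F Hsym Hlip a b τ j hz.2
    refine (Finset.sum_le_sum step0).trans ?_
    have step1 : ∑ z ∈ PA, (if r ≤ (z.2 : ℕ) then β else 0)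
        = (((M - r) * K : ℕ) : ℝ) * β := by
      rw [hPAdef, Finset.sum_filter, Finset.sum_product, Finset.sum_comm]
      have inner : ∀ j : Fin M,
          (∑ τ ∈ A, if τ j = b then (if r ≤ (j : ℕ) then β else 0) else 0)
            = (if r ≤ (j : ℕ) then β else 0) * K := by
        intro j
        rw [← Finset.sum_filter, Finset.sum_const, hKconst j, nsmul_eq_mul, mul_comm]
      rw [Finset.sum_congr rfl fun j _ => inner j, ← Finset.sum_mul]
      have : ∑ j : Fin M, (if r ≤ (j : ℕ) then β else 0) = ((M - r : ℕ) : ℝ) * β := by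
        rw [← Finset.sum_filter, Finset.sum_const, card_filter_ge_fin M r hr, nsmul_eq_mul]
      rw [this]
      push_cast
      ring
    rw [step1]
    ring_nf
    exact le_refl _
  -- expand the difference of expectations
  have expand : uexpect A h1 - uexpect B h2
      = (∑ z ∈ PA, (h1 z.1 - h2 (Function.update z.1 z.2 a))) / ((c ℓ' : ℝ) * A.card) := by
    rw [Finset.sum_sub_distrib, sumPA_h1, sumPA_h2, uexpect, uexpect]
    have hA0 : (A.card : ℝ) ≠ 0 := by exact_mod_cast hcA.ne'
    have hB0 : (B.card : ℝ) ≠ 0 := by exact_mod_cast hcB.ne'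
    have hp0 : ((c ℓ' : ℕ) : ℝ) ≠ 0 := Nat.cast_ne_zero.2 (by omega)
    have hA0' : (0:ℝ) < A.card := by exact_mod_cast hcA
    have hB0' : (0:ℝ) < B.card := by exact_mod_cast hcB
    rw [div_sub_div _ _ hA0 hB0, div_eq_div_iff (mul_pos hA0' hB0').ne' hCA.ne']
    linear_combination (-(∑ τ ∈ B, h2 τ) * (A.card:ℝ)) * cardeq
  rw [expand, abs_div, abs_of_pos hCA]
  have : |∑ z ∈ PA, (h1 z.1 - h2 (Function.update z.1 z.2 a))|
      ≤ β * (((M - r) * K : ℕ) : ℝ) :=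
    (Finset.abs_sum_le_sum_abs _ _).trans bound_sum
  refine ((div_le_div_iff_of_pos_right hCA).2 this).trans ?_
  -- finally:  β (M-r) K / (c ℓ' |A|) = β (M-r) / M  using  M K = c ℓ' |A|
  have hMK : ((M : ℝ)) * K = (c ℓ' : ℝ) * A.card := by exact_mod_cast hKsum
  rw [← hMK]
  have hM0 : (M : ℝ) ≠ 0 := by
    have : (0:ℕ) < M := hM
    exact_mod_cast this.ne'
  have hK0 : (K : ℝ) ≠ 0 := by
    have : (0:ℕ) < K := hK1
    exact_mod_cast this.ne'
  refine le_of_eq ?_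
  rw [div_eq_div_iff (by positivity) (by positivity)]
  push_cast [Nat.cast_sub hr]
  ring

-- ## main induction

theorem mgf_bound {L : ℕ} {x : Fin L → ℝ} (hx : Function.Injective x) (β lam : ℝ) (hβ : 0 ≤ β) :
    ∀ (r M : ℕ) (c : Fin L → ℕ), (∑ ℓ, c ℓ = M) → ∀ (hr : r ≤ M),
    ∀ F : (Fin r → ℝ) → ℝ,
    (∀ (ρ : Fin r → ℝ) (σ : Equiv.Perm (Fin r)), F (ρ ∘ σ) = F ρ) →
    (∀ (ρ : Fin r → ℝ) (i : Fin r) (v : ℝ), |F ρ - F (Function.update ρ i v)| ≤ β) →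
    uexpect (multislice L M c x)
      (fun ω => Real.exp (lam * (F (prj r hr ω)
        - uexpect (multislice L M c x) (fun ω' => F (prj r hr ω')))))
      ≤ Real.exp (lam ^ 2 * β ^ 2 * Wvar (M - r) r / 2) := by
  intro r
  induction r with
  | zero =>
    intro M c hc hr F _ _
    have hne := multislice_nonempty hx M c hc
    have hval : ∀ ω : Fin M → ℝ, F (prj 0 hr ω) = F (fun i : Fin 0 => (0:ℝ)) := by
      intro ω
      exact congrArg F (funext fun i => i.elim0)
    have e1 : (fun ω' : Fin M → ℝ => F (prj 0 hr ω')) = fun _ => F (fun i : Fin 0 => (0:ℝ)) :=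
      funext fun ω => hval ω
    rw [e1, uexpect_const hne]
    have e2 : (fun ω : Fin M → ℝ => Real.exp (lam * (F (prj 0 hr ω) - F (fun i : Fin 0 => (0:ℝ)))))
        = fun _ => (1:ℝ) := by
      funext ω
      rw [hval ω, sub_self, mul_zero, Real.exp_zero]
    rw [e2, uexpect_const hne]
    have : Wvar (M - 0) 0 = 0 := rfl
    rw [this]
    exact Real.one_le_exp (by positivity)
  | succ r ih =>
    intro M c hc hr F Hsym Hlip
    rcases M with _ | M'
    · omega
    have hr' : r ≤ M' := Nat.succ_le_succ_iff.1 hr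
    set MS := multislice L (M' + 1) c x with hMSdef
    have hMSne : MS.Nonempty := multislice_nonempty hx (M' + 1) c hc
    have hMS0 : (0:ℝ) < MS.card := by exact_mod_cast Finset.card_pos.2 hMSne
    set A : Fin L → Finset (Fin M' → ℝ) := fun ℓ => multislice L M' (dec c ℓ) x with hAdef
    set Fsub : Fin L → (Fin r → ℝ) → ℝ := fun ℓ ρ => F (Fin.cons (x ℓ) ρ) with hFsubdef
    set E : Fin L → ℝ := fun ℓ => uexpect (A ℓ) (fun τ => Fsub ℓ (prj r hr' τ)) with hEdef
    set EF : ℝ := uexpect MS (fun ω' => F (prj (r+1) hr ω')) with hEFdef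
    set w : Fin L → ℝ := fun ℓ => ((A ℓ).card : ℝ) / (MS.card : ℝ) with hwdef
    set I : Fin L → ℝ := fun ℓ =>
      uexpect (A ℓ) (fun τ => Real.exp (lam * (Fsub ℓ (prj r hr' τ) - E ℓ))) with hIdef
    have hprjc : ∀ (ℓ : Fin L) (τ : Fin M' → ℝ),
        F (prj (r+1) hr (Fin.cons (x ℓ) τ)) = Fsub ℓ (prj r hr' τ) := by
      intro ℓ τ
      rw [prj_cons hr (x ℓ) τ]
    -- cards
    have hcards : (MS.card : ℝ) = ∑ ℓ, ((A ℓ).card : ℝ) := by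
      have := ms_decomp hx hc (fun _ => (1:ℝ))
      simpa using this
    have hw0 : ∀ ℓ, 0 ≤ w ℓ := fun ℓ => by
      rw [hwdef]; positivity
    have hw1 : ∑ ℓ, w ℓ = 1 := by
      rw [hwdef]
      rw [← Finset.sum_div, ← hcards, div_self hMS0.ne']
    -- EF as weighted sum
    have hEF : EF = ∑ ℓ, w ℓ * E ℓ := by
      rw [hEFdef, uexpect, ms_decomp hx hc]
      rw [Finset.sum_congr rfl fun ℓ _ => Finset.sum_congr rfl fun τ _ => hprjc ℓ τ]
      rw [Finset.sum_congr rfl fun ℓ _ =>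
        sum_eq_card_mul_uexpect (A ℓ) (fun τ => Fsub ℓ (prj r hr' τ))]
      rw [Finset.sum_div]
      exact Finset.sum_congr rfl fun ℓ _ => by rw [hwdef, hEdef]; ring
    have hwd : ∑ ℓ, w ℓ * (E ℓ - EF) = 0 := by
      have : ∀ ℓ, w ℓ * (E ℓ - EF) = w ℓ * E ℓ - w ℓ * EF := fun ℓ => by ring
      rw [Finset.sum_congr rfl fun ℓ _ => this ℓ, Finset.sum_sub_distrib, ← hEF,
        ← Finset.sum_mul, hw1, one_mul, sub_self]
    have hwne : ∀ ℓ, w ℓ ≠ 0 → (A ℓ).Nonempty := by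
      intro ℓ h
      rw [← Finset.card_pos]
      by_contra hcon
      push_neg at hcon
      have : (A ℓ).card = 0 := by omega
      apply h
      rw [hwdef]
      simp [this]
    -- symmetric/Lipschitz for the sections
    have Hsym_sub : ∀ (ℓ : Fin L) (ρ : Fin r → ℝ) (σ : Equiv.Perm (Fin r)),
        Fsub ℓ (ρ ∘ σ) = Fsub ℓ ρ := by
      intro ℓ ρ σ
      have hcomp : Fin.cons (x ℓ) (ρ ∘ σ)
          = (Fin.cons (x ℓ) ρ : Fin (r+1) → ℝ) ∘ (Equiv.Perm.decomposeFin.symm (0, σ)) := by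
        funext i
        refine Fin.cases ?_ (fun k => ?_) i
        · rw [Function.comp_apply, Equiv.Perm.decomposeFin_symm_apply_zero, Fin.cons_zero,
            Fin.cons_zero]
        · rw [Function.comp_apply, Equiv.Perm.decomposeFin_symm_apply_succ, Fin.cons_succ,
            Equiv.swap_self]
          rw [Equiv.refl_apply, Fin.cons_succ]
          rfl
      rw [hFsubdef]
      simp only
      rw [hcomp, Hsym]
    have Hlip_sub : ∀ (ℓ : Fin L) (ρ : Fin r → ℝ) (i : Fin r) (v : ℝ),
        |Fsub ℓ ρ - Fsub ℓ (Function.update ρ i v)| ≤ β := by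
      intro ℓ ρ i v
      rw [hFsubdef]
      simp only
      rw [Fin.cons_update]
      exact Hlip _ i.succ v
    -- the conditional increment bound
    set c₁ : ℝ := β * ((M' - r : ℕ) : ℝ) / (M' : ℝ) with hc₁def
    have hc₁0 : 0 ≤ c₁ := by
      rw [hc₁def]
      apply div_nonneg _ (Nat.cast_nonneg _)
      exact mul_nonneg hβ (Nat.cast_nonneg _)
    have hd : ∀ ℓ, w ℓ ≠ 0 → |E ℓ - EF| ≤ c₁ := by
      intro ℓ hw
      have expand : E ℓ - EF = ∑ ℓ', w ℓ' * (E ℓ - E ℓ') := by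
        have : ∀ ℓ', w ℓ' * (E ℓ - E ℓ') = w ℓ' * E ℓ - w ℓ' * E ℓ' := fun ℓ' => by ring
        rw [Finset.sum_congr rfl fun ℓ' _ => this ℓ', Finset.sum_sub_distrib, ← hEF,
          ← Finset.sum_mul, hw1, one_mul]
      rw [expand]
      refine (Finset.abs_sum_le_sum_abs _ _).trans ?_
      have hterm : ∀ ℓ', |w ℓ' * (E ℓ - E ℓ')| ≤ w ℓ' * c₁ := by
        intro ℓ'
        rw [abs_mul, abs_of_nonneg (hw0 ℓ')]
        by_cases h' : w ℓ' = 0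
        · rw [h']; simp
        · refine mul_le_mul_of_nonneg_left ?_ (hw0 ℓ')
          exact pair_bound hx hc hr' hβ Hsym Hlip (hwne ℓ hw) (hwne ℓ' h')
      refine (Finset.sum_le_sum fun ℓ' _ => hterm ℓ').trans ?_
      rw [← Finset.sum_mul, hw1, one_mul]
    -- factorization
    have hdecomp : uexpect MS (fun ω => Real.exp (lam * (F (prj (r+1) hr ω) - EF)))
        = ∑ ℓ, w ℓ * (Real.exp (lam * (E ℓ - EF)) * I ℓ) := by
      rw [uexpect, ms_decomp hx hc, Finset.sum_div]
      refine Finset.sum_congr rfl fun ℓ _ => ?_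
      have e1 : ∀ τ : Fin M' → ℝ,
          Real.exp (lam * (F (prj (r+1) hr (Fin.cons (x ℓ) τ)) - EF))
            = Real.exp (lam * (E ℓ - EF)) * Real.exp (lam * (Fsub ℓ (prj r hr' τ) - E ℓ)) := by
        intro τ
        rw [hprjc ℓ τ, ← Real.exp_add]
        congr 1
        ring
      rw [Finset.sum_congr rfl fun τ _ => e1 τ, ← Finset.mul_sum,
        sum_eq_card_mul_uexpect (A ℓ) (fun τ => Real.exp (lam * (Fsub ℓ (prj r hr' τ) - E ℓ)))]
      rw [hwdef, hIdef]
      simp only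
      ring
    rw [hdecomp]
    -- bound each conditional expectation by the IH
    set RI : ℝ := Real.exp (lam ^ 2 * β ^ 2 * Wvar (M' - r) r / 2) with hRIdef
    have hIbound : ∀ ℓ, w ℓ ≠ 0 → I ℓ ≤ RI := by
      intro ℓ hw
      obtain ⟨τ0, hτ0⟩ := hwne ℓ hw
      have hsum : ∑ ℓ', dec c ℓ ℓ' = M' := sum_eq_of_mem hx hτ0
      exact ih M' (dec c ℓ) hsum hr' (Fsub ℓ) (Hsym_sub ℓ) (Hlip_sub ℓ)
    have step1 : ∑ ℓ, w ℓ * (Real.exp (lam * (E ℓ - EF)) * I ℓ)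
        ≤ ∑ ℓ, w ℓ * (Real.exp (lam * (E ℓ - EF)) * RI) := by
      refine Finset.sum_le_sum fun ℓ _ => ?_
      by_cases h : w ℓ = 0
      · rw [h]; simp
      · refine mul_le_mul_of_nonneg_left ?_ (hw0 ℓ)
        exact mul_le_mul_of_nonneg_left (hIbound ℓ h) (Real.exp_pos _).le
    refine step1.trans ?_
    have step2 : ∑ ℓ, w ℓ * (Real.exp (lam * (E ℓ - EF)) * RI)
        = RI * ∑ ℓ, w ℓ * Real.exp (lam * (E ℓ - EF)) := by
      rw [Finset.mul_sum]
      exact Finset.sum_congr rfl fun ℓ _ => by ring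
    rw [step2]
    have step3 : ∑ ℓ, w ℓ * Real.exp (lam * (E ℓ - EF)) ≤ Real.exp (lam ^ 2 * c₁ ^ 2 / 2) :=
      weighted_exp_le w (fun ℓ => E ℓ - EF) c₁ lam hw0 hw1 hwd hc₁0 hd
    have hfinal : RI * Real.exp (lam ^ 2 * c₁ ^ 2 / 2)
        = Real.exp (lam ^ 2 * β ^ 2 * Wvar (M' + 1 - (r + 1)) (r + 1) / 2) := by
      rw [hRIdef, ← Real.exp_add]
      congr 1
      have hsub : M' + 1 - (r + 1) = M' - r := by omega
      rw [hsub]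
      have hWv : Wvar (M' - r) (r + 1) = (((M' - r : ℕ) : ℝ) / (((M' - r : ℕ) : ℝ) + r)) ^ 2
          + Wvar (M' - r) r := rfl
      rw [hWv]
      have hcast : ((M' - r : ℕ) : ℝ) + (r : ℝ) = (M' : ℝ) := by
        push_cast [Nat.cast_sub hr']
        ring
      rw [hcast, hc₁def]
      field_simp
      ring
    exact (mul_le_mul_of_nonneg_left step3 (Real.exp_pos _).le).trans_eq hfinal

-- ## assembly

lemma Wvar_zero (r : ℕ) : Wvar 0 r = 0 := by
  induction r with
  | zero => rfl
  | succ r ih => show ((0:ℕ) / ((0:ℕ) + r) : ℝ) ^ 2 + Wvar 0 r = 0; simp [ih]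

lemma Wvar_pos (m r : ℕ) (hm : 1 ≤ m) : 0 < Wvar m (r + 1) := by
  have h1 : (0:ℝ) < ((m : ℝ) / ((m : ℝ) + r)) ^ 2 := by
    have hm0 : (0:ℝ) < m := by exact_mod_cast hm
    positivity
  have := Wvar_nonneg m r
  show 0 < ((m : ℝ) / ((m : ℝ) + r)) ^ 2 + Wvar m r
  linarith

lemma uexpect_neg {α : Type*} (Ω : Finset α) (f : α → ℝ) :
    uexpect Ω (fun a => -(f a)) = -uexpect Ω f := by
  unfold uexpect
  rw [Finset.sum_neg_distrib, neg_div]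

lemma uprob_le_one {α : Type*} (Ω : Finset α) (p : α → Prop) : uprob Ω p ≤ 1 := by
  unfold uprob
  rcases Nat.eq_zero_or_pos Ω.card with h | h
  · simp [h]
  · rw [div_le_one (by exact_mod_cast h)]
    exact_mod_cast Finset.card_le_card (Finset.filter_subset _ _)

lemma uprob_nonneg {α : Type*} (Ω : Finset α) (p : α → Prop) : 0 ≤ uprob Ω p := by
  unfold uprob
  positivity

lemma uprob_congr {α : Type*} (Ω : Finset α) {p q : α → Prop} (h : ∀ a ∈ Ω, p a ↔ q a) :
    uprob Ω p = uprob Ω q := by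
  unfold uprob
  rw [Finset.filter_congr h]

lemma uprob_le_add {α : Type*} (Ω : Finset α) (p q r : α → Prop)
    (h : ∀ a, p a → q a ∨ r a) : uprob Ω p ≤ uprob Ω q + uprob Ω r := by
  unfold uprob
  rw [← add_div]
  rcases Nat.eq_zero_or_pos Ω.card with h0 | h0
  · simp [h0]
  · have hcard : (Ω.filter p).card ≤ (Ω.filter q).card + (Ω.filter r).card := by
      refine (Finset.card_le_card ?_).trans (Finset.card_union_le _ _)
      intro a ha
      rw [Finset.mem_filter] at ha
      rw [Finset.mem_union, Finset.mem_filter, Finset.mem_filter]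
      rcases h a ha.2 with hq | hr
      · exact Or.inl ⟨ha.1, hq⟩
      · exact Or.inr ⟨ha.1, hr⟩
    have hpos : (0:ℝ) < Ω.card := by exact_mod_cast h0
    rw [div_le_div_iff_of_pos_right hpos]
    push_cast
    exact_mod_cast hcard

/-- one-sided sub-Gaussian tail -/
lemma tail_one {L M r : ℕ} {c : Fin L → ℕ} {x : Fin L → ℝ} (hx : Function.Injective x)
    (hc : ∑ ℓ, c ℓ = M) (hr : r ≤ M) {β : ℝ} (hβ : 0 ≤ β)
    (F : (Fin r → ℝ) → ℝ)
    (Hsym : ∀ (ρ : Fin r → ℝ) (σ : Equiv.Perm (Fin r)), F (ρ ∘ σ) = F ρ)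
    (Hlip : ∀ (ρ : Fin r → ℝ) (i : Fin r) (v : ℝ), |F ρ - F (Function.update ρ i v)| ≤ β)
    (u : ℝ) (hu : 0 ≤ u) :
    uprob (multislice L M c x)
      (fun ω => u ≤ F (prj r hr ω)
        - uexpect (multislice L M c x) (fun ω' => F (prj r hr ω')))
      ≤ Real.exp (-(u ^ 2) / (2 * (β ^ 2 * Wvar (M - r) r))) := by
  set MS := multislice L M c x with hMSdef
  have hMSne : MS.Nonempty := multislice_nonempty hx M c hc
  have hMS0 : (0:ℝ) < MS.card := by exact_mod_cast Finset.card_pos.2 hMSne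
  set V : ℝ := β ^ 2 * Wvar (M - r) r with hVdef
  have hV0 : 0 ≤ V := mul_nonneg (sq_nonneg β) (Wvar_nonneg _ _)
  set lam : ℝ := u / V with hlamdef
  have hlam0 : 0 ≤ lam := div_nonneg hu hV0
  set EF : ℝ := uexpect MS (fun ω' => F (prj r hr ω')) with hEFdef
  have hcher := finset_chernoff MS (fun ω => F (prj r hr ω) - EF) u lam hlam0
  have hmgf := mgf_bound hx β lam hβ r M c hc hr F Hsym Hlip
  have hsum : ∑ ω ∈ MS, Real.exp (lam * (F (prj r hr ω) - EF))
      ≤ (MS.card : ℝ) * Real.exp (lam ^ 2 * β ^ 2 * Wvar (M - r) r / 2) := by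
    rw [sum_eq_card_mul_uexpect]
    exact mul_le_mul_of_nonneg_left hmgf hMS0.le
  have key : ((MS.filter fun ω => u ≤ F (prj r hr ω) - EF).card : ℝ)
      ≤ (MS.card : ℝ) * Real.exp (lam ^ 2 * β ^ 2 * Wvar (M - r) r / 2 - lam * u) := by
    have h2 : (0:ℝ) < Real.exp (lam * u) := Real.exp_pos _
    rw [Real.exp_sub, ← mul_div_assoc, le_div_iff₀ h2]
    exact hcher.trans hsum
  have hexp : lam ^ 2 * β ^ 2 * Wvar (M - r) r / 2 - lam * u = -(u ^ 2) / (2 * V) := by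
    rcases eq_or_ne V 0 with hV | hV
    · rw [hlamdef, hV]
      have : lam ^ 2 * β ^ 2 * Wvar (M - r) r = lam ^ 2 * V := by rw [hVdef]; ring
      simp [div_zero, hV]
    · have hVpos : 0 < V := lt_of_le_of_ne hV0 (Ne.symm hV)
      have e1 : lam ^ 2 * β ^ 2 * Wvar (M - r) r = lam ^ 2 * V := by rw [hVdef]; ring
      rw [e1, hlamdef]
      field_simp
      ring
  unfold uprob
  rw [div_le_iff₀ hMS0, ← hexp]
  calc ((MS.filter fun ω => u ≤ F (prj r hr ω) - EF).card : ℝ)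
      ≤ (MS.card : ℝ) * Real.exp (lam ^ 2 * β ^ 2 * Wvar (M - r) r / 2 - lam * u) := key
    _ = Real.exp (lam ^ 2 * β ^ 2 * Wvar (M - r) r / 2 - lam * u) * MS.card := by ring

lemma ciSup_diff_le {h₁ h₂ : ℝ → ℝ} {ε : ℝ}
    (hb₁ : BddAbove (Set.range h₁)) (hb₂ : BddAbove (Set.range h₂))
    (hd : ∀ s, |h₁ s - h₂ s| ≤ ε) :
    |(⨆ s, h₁ s) - ⨆ s, h₂ s| ≤ ε := by
  rw [abs_le]
  constructor
  · have A : (⨆ s, h₂ s) ≤ (⨆ s, h₁ s) + ε := by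
      refine ciSup_le fun s => ?_
      have h := (abs_le.1 (hd s)).1
      have h2 := le_ciSup hb₁ s
      linarith
    linarith
  · have B : (⨆ s, h₁ s) ≤ (⨆ s, h₂ s) + ε := by
      refine ciSup_le fun s => ?_
      have h := (abs_le.1 (hd s)).2
      have h2 := le_ciSup hb₂ s
      linarith
    linarith

/-- Sub-Gaussian tails for the (centered) Kolmogorov distance between the empirical
measure of a sample without replacement and the true distribution. -/
theorem stmt7 (L N n : ℕ) (hL : 2 ≤ L) (κ : Fin L → ℕ) (hκ : ∀ ℓ, 1 ≤ κ ℓ)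
    (hN : N = ∑ ℓ, κ ℓ) (x : Fin L → ℝ) (hx : StrictMono x) (hn : n ≤ N) (hn1 : 1 ≤ n)
    (g : ℝ → (Fin n → ℝ) → ℝ)
    (hg : ∀ s : ℝ, ∀ ω : Fin n → ℝ,
      g s ω = (1 / (n : ℝ)) * ∑ i, if ω i ≤ s then (1 : ℝ) else 0)
    (f : (Fin n → ℝ) → ℝ)
    (hf : ∀ ω : Fin n → ℝ, f ω = ⨆ s : ℝ, (g s ω - msExpectN L N n κ x hn (g s)))
    (t : ℝ) (ht : 0 ≤ t) :
    msProbN L N n κ x hn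
        (fun ω => Real.sqrt n * |f ω - msExpectN L N n κ x hn f| ≥ t) ≤
      2 * Real.exp (-(t ^ 2) / (4 * (1 - (n : ℝ) / N))) := by
  have hx' : Function.Injective x := hx.injective
  have hκsum : ∑ ℓ, κ ℓ = N := hN.symm
  have hn0 : (0:ℝ) < n := by exact_mod_cast hn1
  have hN1 : 1 ≤ N := hn1.trans hn
  have hN0 : (0:ℝ) < N := by exact_mod_cast hN1
  set MS := multislice L N κ x with hMSdef
  set β : ℝ := 1 / (n:ℝ) with hβdef
  have hβpos : 0 < β := by positivity
  -- properties of g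
  have hgsym : ∀ (s : ℝ) (ρ : Fin n → ℝ) (σ : Equiv.Perm (Fin n)), g s (ρ ∘ σ) = g s ρ := by
    intro s ρ σ
    rw [hg, hg]
    congr 1
    exact Fintype.sum_equiv σ _ _ fun i => rfl
  have hg0 : ∀ (s : ℝ) (ρ : Fin n → ℝ), 0 ≤ g s ρ := by
    intro s ρ
    rw [hg]
    apply mul_nonneg (by positivity)
    apply Finset.sum_nonneg
    intro i _
    split <;> norm_num
  have hg1 : ∀ (s : ℝ) (ρ : Fin n → ℝ), g s ρ ≤ 1 := by
    intro s ρ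
    rw [hg]
    have h1 : ∑ i, (if ρ i ≤ s then (1:ℝ) else 0) ≤ ∑ _i : Fin n, (1:ℝ) :=
      Finset.sum_le_sum fun i _ => by split <;> norm_num
    have h2 : ∑ _i : Fin n, (1:ℝ) = n := by simp
    calc (1 / (n:ℝ)) * ∑ i, (if ρ i ≤ s then (1:ℝ) else 0)
        ≤ (1 / (n:ℝ)) * n := by
          apply mul_le_mul_of_nonneg_left (h1.trans_eq h2) (by positivity)
      _ = 1 := by field_simp
  have hC0 : ∀ s : ℝ, 0 ≤ msExpectN L N n κ x hn (g s) := by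
    intro s
    unfold msExpectN uexpect
    apply div_nonneg _ (Nat.cast_nonneg _)
    apply Finset.sum_nonneg
    intro ω _
    exact hg0 s _
  have hbdd : ∀ ρ : Fin n → ℝ,
      BddAbove (Set.range fun s => g s ρ - msExpectN L N n κ x hn (g s)) := by
    intro ρ
    refine ⟨1, ?_⟩
    rintro y ⟨s, rfl⟩
    have := hg1 s ρ
    have := hC0 s
    simp only
    linarith
  -- properties of f
  have Hsym : ∀ (ρ : Fin n → ℝ) (σ : Equiv.Perm (Fin n)), f (ρ ∘ σ) = f ρ := by
    intro ρ σ
    rw [hf, hf]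
    congr 1
    funext s
    rw [hgsym s ρ σ]
  have Hlip : ∀ (ρ : Fin n → ℝ) (i : Fin n) (v : ℝ),
      |f ρ - f (Function.update ρ i v)| ≤ β := by
    intro ρ i v
    rw [hf, hf]
    refine ciSup_diff_le (hbdd ρ) (hbdd _) fun s => ?_
    have e1 : g s ρ - msExpectN L N n κ x hn (g s)
        - (g s (Function.update ρ i v) - msExpectN L N n κ x hn (g s))
        = g s ρ - g s (Function.update ρ i v) := by ring
    rw [e1, hg, hg, ← mul_sub]
    have hsplit : ∑ j, (if ρ j ≤ s then (1:ℝ) else 0)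
        - ∑ j, (if Function.update ρ i v j ≤ s then (1:ℝ) else 0)
        = (if ρ i ≤ s then (1:ℝ) else 0) - (if v ≤ s then (1:ℝ) else 0) := by
      rw [← Finset.sum_sub_distrib, Finset.sum_eq_single i]
      · rw [Function.update_self]
      · intro j _ hj
        rw [Function.update_of_ne hj]
        ring
      · simp
    rw [hsplit, abs_mul]
    have hind : |(if ρ i ≤ s then (1:ℝ) else 0) - (if v ≤ s then (1:ℝ) else 0)| ≤ 1 := by
      split <;> split <;> norm_num
    calc |1 / (n:ℝ)| * |(if ρ i ≤ s then (1:ℝ) else 0) - (if v ≤ s then (1:ℝ) else 0)|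
        ≤ |1 / (n:ℝ)| * 1 := mul_le_mul_of_nonneg_left hind (abs_nonneg _)
      _ = β := by rw [mul_one, hβdef, abs_of_pos (by positivity : (0:ℝ) < 1 / (n:ℝ))]
  -- negated function
  set F2 : (Fin n → ℝ) → ℝ := fun ρ => -(f ρ) with hF2def
  have Hsym2 : ∀ (ρ : Fin n → ℝ) (σ : Equiv.Perm (Fin n)), F2 (ρ ∘ σ) = F2 ρ := by
    intro ρ σ
    rw [hF2def]
    simp only
    rw [Hsym]
  have Hlip2 : ∀ (ρ : Fin n → ℝ) (i : Fin n) (v : ℝ),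
      |F2 ρ - F2 (Function.update ρ i v)| ≤ β := by
    intro ρ i v
    rw [hF2def]
    simp only
    rw [show -f ρ - -f (Function.update ρ i v) = -(f ρ - f (Function.update ρ i v)) by ring,
      abs_neg]
    exact Hlip ρ i v
  -- events
  have hEFf : msExpectN L N n κ x hn f = uexpect MS (fun ω' => f (prj n hn ω')) := rfl
  have hE2 : uexpect MS (fun ω' => F2 (prj n hn ω'))
      = -(uexpect MS (fun ω' => f (prj n hn ω'))) := uexpect_neg MS _
  set u : ℝ := t / Real.sqrt n with hudef
  have hsqrt : 0 < Real.sqrt n := Real.sqrt_pos.2 hn0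
  have hu : 0 ≤ u := div_nonneg ht hsqrt.le
  set EFf : ℝ := uexpect MS (fun ω' => f (prj n hn ω')) with hEFfdef
  have himp : ∀ ω : Fin N → ℝ,
      (Real.sqrt n * |f (prj n hn ω) - msExpectN L N n κ x hn f| ≥ t)
      → (u ≤ f (prj n hn ω) - uexpect MS (fun ω' => f (prj n hn ω')))
        ∨ (u ≤ F2 (prj n hn ω) - uexpect MS (fun ω' => F2 (prj n hn ω'))) := by
    intro ω hp
    have h1 : t ≤ |f (prj n hn ω) - EFf| * Real.sqrt n := by
      rw [mul_comm]
      exact hp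
    have h2 : u ≤ |f (prj n hn ω) - EFf| := (div_le_iff₀ hsqrt).2 h1
    rcases le_abs.1 h2 with h | h
    · exact Or.inl h
    · right
      rw [hE2, hF2def]
      simp only
      linarith
  -- apply the tail bounds
  have tail1 := tail_one hx' hκsum hn (le_of_lt hβpos) f Hsym Hlip u hu
  have tail2 := tail_one hx' hκsum hn (le_of_lt hβpos) F2 Hsym2 Hlip2 u hu
  have hsplit : msProbN L N n κ x hn
      (fun ω => Real.sqrt n * |f ω - msExpectN L N n κ x hn f| ≥ t)
      ≤ Real.exp (-(u ^ 2) / (2 * (β ^ 2 * Wvar (N - n) n)))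
        + Real.exp (-(u ^ 2) / (2 * (β ^ 2 * Wvar (N - n) n))) := by
    refine le_trans ?_ (add_le_add tail1 tail2)
    exact uprob_le_add MS _ _ _ himp
  refine hsplit.trans ?_
  rw [← two_mul]
  -- exponent comparison
  have hu2 : u ^ 2 = t ^ 2 / n := by
    rw [hudef, div_pow, Real.sq_sqrt hn0.le]
  have hcmp : -(u ^ 2) / (2 * (β ^ 2 * Wvar (N - n) n))
      ≤ -(t ^ 2) / (4 * (1 - (n:ℝ) / N)) := by
    set m : ℕ := N - n with hmdef
    have hD : 4 * (1 - (n:ℝ) / N) = 4 * (m:ℝ) / N := by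
      rw [hmdef]
      rw [Nat.cast_sub hn]
      field_simp
    rcases Nat.eq_zero_or_pos m with hm0 | hm1
    · -- n = N
      rw [hD, hm0, hu2, Wvar_zero]
      simp
    · -- n < N
      have hmn : (m:ℝ) + n = N := by
        rw [hmdef]
        rw [Nat.cast_sub hn]
        ring
      set W : ℝ := Wvar m n with hWdef
      have hWpos : 0 < W := by
        obtain ⟨n', rfl⟩ : ∃ n', n = n' + 1 := ⟨n - 1, by omega⟩
        exact Wvar_pos m n' hm1
      have hWle : W ≤ 2 * m * n / N := by
        have := Wvar_le m n hm1
        rwa [hmn] at this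
      have hm0' : (0:ℝ) < m := by exact_mod_cast hm1
      have hkey : (n:ℝ) * (2 * (β ^ 2 * W)) ≤ 4 * m / N := by
        have e1 : (n:ℝ) * (2 * (β ^ 2 * W)) = 2 * W / n := by
          rw [hβdef]
          field_simp
        rw [e1]
        calc 2 * W / (n:ℝ) ≤ 2 * (2 * m * n / N) / n := by gcongr
          _ = 4 * m / N := by field_simp; ring
      rw [hD, hu2, neg_div, neg_div, div_div, neg_le_neg_iff]
      have hP : (0:ℝ) < (n:ℝ) * (2 * (β ^ 2 * W)) := by positivity
      have hQ : (0:ℝ) < 4 * (m:ℝ) / N := by positivity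
      exact div_le_div_of_nonneg_left (sq_nonneg t) hP hkey
  have h2pos : (0:ℝ) ≤ 2 := by norm_num
  exact mul_le_mul_of_nonneg_left (Real.exp_le_exp.2 hcmp) h2pos
end
end
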